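/- (Merge Theorem) Let 𝓘 be an implementation of an object O that is consistent under a well-behaved memory model M. Suppose there exist π0 ∈ traces(𝓘) and complete histories h1, h2 of O such that, writing h0 = π0|_obj and σ0 = π0|_mem: (i) h0 ∈ spec(O), σ0 ∈ traces(SCM), and procs(h1) ∩ procs(h2) = ∅; (ii) for i ∈ {1,2}, 𝓘 is available after h0 w.r.t. some complete sequential history h_seq^i with h_i ⊑ h_seq^i; (iii) h1 and h2 are not weakly (resp. strongly) mergeable in spec(O) after h0. Then there exist π1 and π2 such that: (a) for i ∈ {1,2}, π0·π_i ∈ traces(𝓘), π_i|_obj = h_i, σ0·(π_i|_mem) ∈ traces(SCM), and procs(π_i) = procs(h_i); and (b) for every sproc-reordering π1' of π1 and sproc-reordering π2' of π2 with π1'|_obj = h1, π2'|_obj = h2, and σ0·(π1'|_mem), σ0·(π2'|_mem) ∈ traces(SCM), the sequences π1'|_mem and π2'|_mem are not weakly (resp. strongly) mergeable in M; in particular, π1|_mem and π2|_mem are not weakly (resp. strongly) mergeable in M. -/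

import Mathlib

set_option autoImplicit false

namespace WMM

universe u v

/-! ### Memory actions and events -/

inductive MemAct (Var Val : Type) : Type where
  | write (x : Var) (v : Val)
  | read (x : Var) (v : Val)
  | rmw (x : Var) (vold vnew : Val)
  | fence

structure MemEv (Proc Var Val : Type) : Type where
  proc : Proc
  act : MemAct Var Val

section Mem

variable {Proc Var Val : Type}

def MemEv.isWrite (e : MemEv Proc Var Val) : Prop := ∃ x v, e.act = MemAct.write x v
def MemEv.isRead (e : MemEv Proc Var Val) : Prop := ∃ x v, e.act = MemAct.read x v
def MemEv.isRMW (e : MemEv Proc Var Val) : Prop := ∃ x v w, e.act = MemAct.rmw x v w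
def MemEv.isFence (e : MemEv Proc Var Val) : Prop := e.act = MemAct.fence

/-- The set of processes appearing in an observable memory sequence. -/
def memProcs (σ : List (MemEv Proc Var Val)) : Set Proc := {p | ∃ e ∈ σ, MemEv.proc e = p}

end Mem

/-! ### Shuffles -/

/-- `Shuffle s1 s2 s` means `s` is an interleaving of `s1` and `s2`. -/
inductive Shuffle {α : Type u} : List α → List α → List α → Prop where
  | nil : Shuffle [] [] []
  | left {s1 s2 s : List α} (x : α) : Shuffle s1 s2 s → Shuffle (s1 ++ [x]) s2 (s ++ [x])
  | right {s1 s2 s : List α} (x : α) : Shuffle s1 s2 s → Shuffle s1 (s2 ++ [x]) (s ++ [x])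

/-! ### Paths of a labeled transition relation -/

inductive LTSPath {S : Type u} {L : Type v} (step : S → L → S → Prop) : S → List L → S → Prop where
  | nil (s : S) : LTSPath step s [] s
  | cons {s s' s'' : S} {l : L} {ls : List L} :
      step s l s' → LTSPath step s' ls s'' → LTSPath step s (l :: ls) s''

/-! ### Memory models -/

/-- A memory model: an LTS whose labels are memory events or the silent label `τ = none`. -/
structure MemModel (Proc Var Val : Type) : Type 1 where
  State : Type
  init : State
  step : State → Option (MemEv Proc Var Val) → State → Prop

section MemModel

variable {Proc Var Val : Type}

/-- A state is stable if no silent (`τ`) transition is enabled. -/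
def MemModel.Stable (M : MemModel Proc Var Val) (q : M.State) : Prop :=
  ∀ q', ¬ M.step q none q'

/-- Observable memory sequences from a state: traces with `τ` steps erased. -/
def MemModel.OTraces (M : MemModel Proc Var Val) (q : M.State) :
    Set (List (MemEv Proc Var Val)) :=
  {σ | ∃ (π : List (Option (MemEv Proc Var Val))) (q' : M.State),
      LTSPath M.step q π q' ∧ π.reduceOption = σ}

def WeaklyMergeable (M : MemModel Proc Var Val) (σ1 σ2 : List (MemEv Proc Var Val)) : Prop :=
  ∀ q0 : M.State, M.Stable q0 → σ1 ∈ M.OTraces q0 → σ2 ∈ M.OTraces q0 →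
    ∃ σ, Shuffle σ1 σ2 σ ∧ σ ∈ M.OTraces q0

def StronglyMergeable (M : MemModel Proc Var Val) (σ1 σ2 : List (MemEv Proc Var Val)) : Prop :=
  ∀ q0 : M.State, M.Stable q0 → σ1 ∈ M.OTraces q0 → σ2 ∈ M.OTraces q0 →
    ∀ σ, Shuffle σ1 σ2 σ → σ ∈ M.OTraces q0

/-- Weak/strong mergeability, selected by a Boolean flag. -/
def MemMergeable (strong : Bool) (M : MemModel Proc Var Val)
    (σ1 σ2 : List (MemEv Proc Var Val)) : Prop :=
  if strong then StronglyMergeable M σ1 σ2 else WeaklyMergeable M σ1 σ2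

end MemModel

/-! ### The SCM, TSO and RA memory models -/

section Models

variable (Proc Var Val : Type)

inductive SCMStep [DecidableEq Var] :
    (Var → Val) → Option (MemEv Proc Var Val) → (Var → Val) → Prop where
  | write (m : Var → Val) (p : Proc) (x : Var) (v : Val) :
      SCMStep m (some ⟨p, MemAct.write x v⟩) (Function.update m x v)
  | read (m : Var → Val) (p : Proc) (x : Var) :
      SCMStep m (some ⟨p, MemAct.read x (m x)⟩) m
  | rmw (m : Var → Val) (p : Proc) (x : Var) (vnew : Val) :
      SCMStep m (some ⟨p, MemAct.rmw x (m x) vnew⟩) (Function.update m x vnew)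
  | fence (m : Var → Val) (p : Proc) :
      SCMStep m (some ⟨p, MemAct.fence⟩) m

def SCMModel [DecidableEq Var] [Zero Val] : MemModel Proc Var Val where
  State := Var → Val
  init := fun _ => 0
  step := SCMStep Proc Var Val

inductive TSOStep [DecidableEq Proc] [DecidableEq Var] :
    (Var → Val) × (Proc → List (Var × Val)) → Option (MemEv Proc Var Val) →
      (Var → Val) × (Proc → List (Var × Val)) → Prop where
  | write (m : Var → Val) (b : Proc → List (Var × Val)) (p : Proc) (x : Var) (v : Val) :
      TSOStep (m, b) (some ⟨p, MemAct.write x v⟩)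
        (m, Function.update b p (b p ++ [(x, v)]))
  | readBuffer (m : Var → Val) (b : Proc → List (Var × Val)) (p : Proc) (x : Var) (v : Val) :
      ((b p).filter (fun pr => decide (pr.1 = x))).getLast? = some (x, v) →
      TSOStep (m, b) (some ⟨p, MemAct.read x v⟩) (m, b)
  | readMemory (m : Var → Val) (b : Proc → List (Var × Val)) (p : Proc) (x : Var) :
      (b p).filter (fun pr => decide (pr.1 = x)) = [] →
      TSOStep (m, b) (some ⟨p, MemAct.read x (m x)⟩) (m, b)
  | rmw (m : Var → Val) (b : Proc → List (Var × Val)) (p : Proc) (x : Var) (vnew : Val) :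
      b p = [] →
      TSOStep (m, b) (some ⟨p, MemAct.rmw x (m x) vnew⟩) (Function.update m x vnew, b)
  | fence (m : Var → Val) (b : Proc → List (Var × Val)) (p : Proc) :
      b p = [] → TSOStep (m, b) (some ⟨p, MemAct.fence⟩) (m, b)
  | propagate (m : Var → Val) (b : Proc → List (Var × Val)) (p : Proc) (x : Var) (v : Val)
      (β : List (Var × Val)) :
      b p = (x, v) :: β →
      TSOStep (m, b) none (Function.update m x v, Function.update b p β)

def TSOModel [DecidableEq Proc] [DecidableEq Var] [Zero Val] : MemModel Proc Var Val where
  State := (Var → Val) × (Proc → List (Var × Val))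
  init := (fun _ => 0, fun _ => [])
  step := TSOStep Proc Var Val

/-- A message of the RA memory model. -/
structure RAMsg (Var Val : Type) : Type where
  var : Var
  val : Val
  time : ℕ
  view : Var → ℕ

structure RAState (Proc Var Val : Type) : Type where
  mem : Set (RAMsg Var Val)
  view : Proc → Var → ℕ
  fview : Var → ℕ

end Models

/-- Pointwise join (maximum) of two views. -/
def viewJoin {Var : Type} (V1 V2 : Var → ℕ) : Var → ℕ := fun y => max (V1 y) (V2 y)

section RA

variable (Proc Var Val : Type)

inductive RAStep [DecidableEq Proc] [DecidableEq Var] :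
    RAState Proc Var Val → Option (MemEv Proc Var Val) → RAState Proc Var Val → Prop where
  | write (s : RAState Proc Var Val) (p : Proc) (x : Var) (v : Val) (t : ℕ) :
      s.view p x < t →
      (∀ μ ∈ s.mem, μ.var = x → μ.time ≠ t) →
      RAStep s (some ⟨p, MemAct.write x v⟩)
        ⟨insert ⟨x, v, t, Function.update (s.view p) x t⟩ s.mem,
         Function.update s.view p (Function.update (s.view p) x t), s.fview⟩
  | read (s : RAState Proc Var Val) (p : Proc) (x : Var) (v : Val) (V : Var → ℕ) :
      (⟨x, v, s.view p x, V⟩ : RAMsg Var Val) ∈ s.mem →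
      RAStep s (some ⟨p, MemAct.read x v⟩) s
  | rmw (s : RAState Proc Var Val) (p : Proc) (x : Var) (vexp vnew : Val) (V : Var → ℕ) :
      (⟨x, vexp, s.view p x, V⟩ : RAMsg Var Val) ∈ s.mem →
      (∀ μ ∈ s.mem, μ.var = x → μ.time ≠ s.view p x + 1) →
      RAStep s (some ⟨p, MemAct.rmw x vexp vnew⟩)
        ⟨insert ⟨x, vnew, s.view p x + 1, Function.update (s.view p) x (s.view p x + 1)⟩ s.mem,
         Function.update s.view p (Function.update (s.view p) x (s.view p x + 1)), s.fview⟩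
  | fence (s : RAState Proc Var Val) (p : Proc) :
      RAStep s (some ⟨p, MemAct.fence⟩)
        ⟨s.mem, Function.update s.view p (viewJoin (s.view p) s.fview),
         viewJoin (s.view p) s.fview⟩
  | propagate (s : RAState Proc Var Val) (p : Proc) (μ : RAMsg Var Val) :
      μ ∈ s.mem → s.view p μ.var < μ.time →
      RAStep s none
        ⟨s.mem, Function.update s.view p (viewJoin (s.view p) μ.view), s.fview⟩

def RAModel [DecidableEq Proc] [DecidableEq Var] [Zero Val] : MemModel Proc Var Val where
  State := RAState Proc Var Val
  init := ⟨{μ | ∃ x : Var, μ = ⟨x, 0, 0, fun _ => 0⟩}, fun _ _ => 0, fun _ => 0⟩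
  step := RAStep Proc Var Val

end RA

/-! ### Well-behaved memory models -/

section WellBehaved

variable {Proc Var Val : Type}

/-- Reachability by silent steps. -/
def TauReach (M : MemModel Proc Var Val) : M.State → M.State → Prop :=
  Relation.ReflTransGen (fun q q' => M.step q none q')

/-- A memory model is well-behaved if there is a simulation from SCM into its stable states. -/
def WellBehaved [DecidableEq Var] [Zero Val] (M : MemModel Proc Var Val) : Prop :=
  ∃ R : (Var → Val) → M.State → Prop,
    (∀ m q, R m q → M.Stable q) ∧
    R (fun _ => (0 : Val)) M.init ∧
    (∀ m q, R m q → ∀ (l : Option (MemEv Proc Var Val)) (m' : Var → Val),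
      SCMStep Proc Var Val m l m' →
      ∃ q1 q' : M.State, M.step q l q1 ∧ TauReach M q1 q' ∧ M.Stable q' ∧ R m' q')

end WellBehaved

/-! ### Patterns of observable memory sequences -/

section Patterns

variable {Proc Var Val : Type}

def IsSolo (σ : List (MemEv Proc Var Val)) : Prop :=
  ∀ e ∈ σ, ∀ e' ∈ σ, MemEv.proc e = MemEv.proc e'

def IsRW (σ : List (MemEv Proc Var Val)) : Prop :=
  ∀ e ∈ σ, MemEv.isWrite e ∨ MemEv.isRead e

def IsRWF (σ : List (MemEv Proc Var Val)) : Prop :=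
  ∀ e ∈ σ, MemEv.isWrite e ∨ MemEv.isRead e ∨ MemEv.isFence e

/-- Read-before-write: no read-after-write pattern on distinct variables. -/
def IsRBW (σ : List (MemEv Proc Var Val)) : Prop :=
  ∀ (k1 k2 : ℕ) (e1 e2 : MemEv Proc Var Val) (x y : Var) (v w : Val),
    k1 < k2 → σ[k1]? = some e1 → σ[k2]? = some e2 →
    e1.act = MemAct.write x v → e2.act = MemAct.read y w → x ≠ y →
    ∃ (k : ℕ) (e : MemEv Proc Var Val) (u : Val),
      k1 < k ∧ k < k2 ∧ σ[k]? = some e ∧ e.act = MemAct.write y u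

/-- Trailing-fence: no fence is immediately followed by a non-fence event. -/
def IsTF (σ : List (MemEv Proc Var Val)) : Prop :=
  ∀ (k : ℕ) (e e' : MemEv Proc Var Val),
    σ[k]? = some e → σ[k + 1]? = some e' → MemEv.isFence e → MemEv.isFence e'

/-- Leading-fence: no fence is immediately preceded by a non-fence event. -/
def IsLF (σ : List (MemEv Proc Var Val)) : Prop :=
  ∀ (k : ℕ) (e e' : MemEv Proc Var Val),
    σ[k]? = some e → σ[k + 1]? = some e' → MemEv.isFence e' → MemEv.isFence e

def IsLTF (σ : List (MemEv Proc Var Val)) : Prop :=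
  ∃ σ' σ'' : List (MemEv Proc Var Val), σ = σ' ++ σ'' ∧ IsLF σ' ∧ IsTF σ''

def IsPPTF [DecidableEq Proc] (σ : List (MemEv Proc Var Val)) : Prop :=
  ∀ p : Proc, IsTF (σ.filter (fun e => decide (e.proc = p)))

def IsPPLF [DecidableEq Proc] (σ : List (MemEv Proc Var Val)) : Prop :=
  ∀ p : Proc, IsLF (σ.filter (fun e => decide (e.proc = p)))

end Patterns

/-! ### Objects, events and histories -/

inductive ObjAct (Op Ret : Type) : Type where
  | inv (o : Op)
  | res (u : Ret)

structure ObjEv (Proc Op Ret : Type) : Type where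
  proc : Proc
  act : ObjAct Op Ret

inductive EvAct (Var Val Op Ret : Type) : Type where
  | mem (a : MemAct Var Val)
  | inv (o : Op)
  | res (u : Ret)

/-- A general event: a memory event or an object event of some process. -/
structure Ev (Proc Var Val Op Ret : Type) : Type where
  proc : Proc
  act : EvAct Var Val Op Ret

section Events

variable {Proc Var Val Op Ret : Type}

def ObjAct.isInv : ObjAct Op Ret → Prop
  | ObjAct.inv _ => True
  | _ => False

def ObjAct.isRes : ObjAct Op Ret → Prop
  | ObjAct.res _ => True
  | _ => False

def Ev.toMem : Ev Proc Var Val Op Ret → Option (MemEv Proc Var Val)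
  | ⟨p, EvAct.mem a⟩ => some ⟨p, a⟩
  | _ => none

def Ev.toObj : Ev Proc Var Val Op Ret → Option (ObjEv Proc Op Ret)
  | ⟨p, EvAct.inv o⟩ => some ⟨p, ObjAct.inv o⟩
  | ⟨p, EvAct.res u⟩ => some ⟨p, ObjAct.res u⟩
  | _ => none

/-- Restriction of an event sequence to its memory events. -/
def restrictMem (π : List (Ev Proc Var Val Op Ret)) : List (MemEv Proc Var Val) :=
  π.filterMap Ev.toMem

/-- Restriction of an event sequence to its object events. -/
def restrictObj (π : List (Ev Proc Var Val Op Ret)) : List (ObjEv Proc Op Ret) :=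
  π.filterMap Ev.toObj

def procsEv (π : List (Ev Proc Var Val Op Ret)) : Set Proc := {p | ∃ e ∈ π, Ev.proc e = p}

def procsObj (h : List (ObjEv Proc Op Ret)) : Set Proc := {p | ∃ e ∈ h, ObjEv.proc e = p}

def Ev.isWriteEv (e : Ev Proc Var Val Op Ret) : Prop :=
  ∃ x v, e.act = EvAct.mem (MemAct.write x v)

def Ev.isReadEv (e : Ev Proc Var Val Op Ret) : Prop :=
  ∃ x v, e.act = EvAct.mem (MemAct.read x v)

def Ev.isResEv (e : Ev Proc Var Val Op Ret) : Prop := ∃ u, e.act = EvAct.res u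

def Ev.isFenceEv (e : Ev Proc Var Val Op Ret) : Prop := e.act = EvAct.mem MemAct.fence

/-- The two-event history `⟨p : o ⇒ u⟩`. -/
def invres (p : Proc) (o : Op) (u : Ret) : List (ObjEv Proc Op Ret) :=
  [⟨p, ObjAct.inv o⟩, ⟨p, ObjAct.res u⟩]

/-- Complete sequential histories: concatenations of matching invocation–response pairs. -/
inductive CompleteSeq : List (ObjEv Proc Op Ret) → Prop where
  | nil : CompleteSeq []
  | cons (p : Proc) (o : Op) (u : Ret) {h : List (ObjEv Proc Op Ret)} :
      CompleteSeq h → CompleteSeq (⟨p, ObjAct.inv o⟩ :: ⟨p, ObjAct.res u⟩ :: h)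

/-- Sequential histories: prefixes of complete sequential histories. -/
def Sequential (h : List (ObjEv Proc Op Ret)) : Prop :=
  ∃ h' : List (ObjEv Proc Op Ret), CompleteSeq h' ∧ h <+: h'

def WellFormed [DecidableEq Proc] (h : List (ObjEv Proc Op Ret)) : Prop :=
  ∀ p : Proc, Sequential (h.filter (fun e => decide (e.proc = p)))

/-- Complete histories: well-formed, and each process's restriction is empty or
ends with a response event. -/
def CompleteH [DecidableEq Proc] (h : List (ObjEv Proc Op Ret)) : Prop :=
  WellFormed h ∧
    ∀ p : Proc, h.filter (fun e => decide (e.proc = p)) = [] ∨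
      ∃ e : ObjEv Proc Op Ret,
        (h.filter (fun e => decide (e.proc = p))).getLast? = some e ∧ e.act.isRes

end Events

/-! ### Reorderings and linearization -/

/-- `Reorder R s s'` : `s'` is an `R`-reordering of `s`. -/
def Reorder {α : Type u} (R : α → α → Prop) (s s' : List α) : Prop :=
  ∃ f : Fin s.length ≃ Fin s'.length,
    (∀ i : Fin s.length, s'.get (f i) = s.get i) ∧
    ∀ i j : Fin s.length, i < j → R (s.get i) (s.get j) → f i < f j

section Lin

variable {Proc Var Val Op Ret : Type}

/-- The `sproc` relation on general events: same process. -/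
def sprocEv (e1 e2 : Ev Proc Var Val Op Ret) : Prop := e1.proc = e2.proc

/-- The `lin` relation on object events. -/
def linRel (e1 e2 : ObjEv Proc Op Ret) : Prop :=
  e1.proc = e2.proc ∨ (e1.act.isRes ∧ e2.act.isInv)

/-- `h ⊑ H'`: some history in `H'` linearizes `h`. -/
def LinInto (Spec : Set (List (ObjEv Proc Op Ret))) (h : List (ObjEv Proc Op Ret)) : Prop :=
  ∃ h' ∈ Spec, Reorder linRel h h'

/-- A specification: a prefix-closed set of complete sequential histories. -/
def IsSpec (Spec : Set (List (ObjEv Proc Op Ret))) : Prop :=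
  (∀ h ∈ Spec, CompleteSeq h) ∧
  (∀ h ∈ Spec, ∀ h' : List (ObjEv Proc Op Ret), h' <+: h → CompleteSeq h' → h' ∈ Spec)

/-- A deterministic object: no two specification histories have a longest common prefix
ending with an invocation. -/
def Deterministic (Spec : Set (List (ObjEv Proc Op Ret))) : Prop :=
  ∀ h1 ∈ Spec, ∀ h2 ∈ Spec, ∀ (g : List (ObjEv Proc Op Ret)) (p : Proc) (o : Op),
    (g ++ [⟨p, ObjAct.inv o⟩]) <+: h1 → (g ++ [⟨p, ObjAct.inv o⟩]) <+: h2 →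
    ∃ e : ObjEv Proc Op Ret,
      (g ++ [⟨p, ObjAct.inv o⟩, e]) <+: h1 ∧ (g ++ [⟨p, ObjAct.inv o⟩, e]) <+: h2

def WeaklySpecMergeableAfter (Spec : Set (List (ObjEv Proc Op Ret)))
    (h0 h1 h2 : List (ObjEv Proc Op Ret)) : Prop :=
  LinInto Spec (h0 ++ h1) → LinInto Spec (h0 ++ h2) →
    ∃ h, Shuffle h1 h2 h ∧ LinInto Spec (h0 ++ h)

def StronglySpecMergeableAfter (Spec : Set (List (ObjEv Proc Op Ret)))
    (h0 h1 h2 : List (ObjEv Proc Op Ret)) : Prop :=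
  LinInto Spec (h0 ++ h1) → LinInto Spec (h0 ++ h2) →
    ∀ h, Shuffle h1 h2 h → LinInto Spec (h0 ++ h)

def SpecMergeableAfter (strong : Bool) (Spec : Set (List (ObjEv Proc Op Ret)))
    (h0 h1 h2 : List (ObjEv Proc Op Ret)) : Prop :=
  if strong then StronglySpecMergeableAfter Spec h0 h1 h2
  else WeaklySpecMergeableAfter Spec h0 h1 h2

/-- One-sided non-commutativity. -/
def OneSidedNonComm (Spec : Set (List (ObjEv Proc Op Ret))) (o1 o2 : Op) : Prop :=
  ∃ (h0 : List (ObjEv Proc Op Ret)) (p1 p2 : Proc) (u1 v1 u2 : Ret),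
    CompleteSeq h0 ∧ p1 ≠ p2 ∧ u1 ≠ v1 ∧
    h0 ++ invres p1 o1 u1 ∈ Spec ∧
    h0 ++ invres p2 o2 u2 ++ invres p1 o1 v1 ∈ Spec

/-- Two-sided non-commutativity. -/
def TwoSidedNonComm (Spec : Set (List (ObjEv Proc Op Ret))) (o1 o2 : Op) : Prop :=
  ∃ (h0 : List (ObjEv Proc Op Ret)) (p1 p2 : Proc) (u1 v1 u2 v2 : Ret),
    CompleteSeq h0 ∧ p1 ≠ p2 ∧ u1 ≠ v1 ∧ u2 ≠ v2 ∧
    h0 ++ invres p1 o1 u1 ++ invres p2 o2 v2 ∈ Spec ∧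
    h0 ++ invres p2 o2 u2 ++ invres p1 o1 v1 ∈ Spec

end Lin

/-! ### Implementations -/

/-- An implementation of an operation for a process `p`: an LTS labeled by events of `p`
in which a response event is always the last transition. -/
structure OpImpl (Proc Var Val Op Ret : Type) (p : Proc) : Type 1 where
  State : Type
  init : State
  step : State → Ev Proc Var Val Op Ret → State → Prop
  proc_eq : ∀ q e q', step q e q' → Ev.proc e = p
  res_final : ∀ (q : State) (u : Ret) (q' : State),
    step q ⟨p, EvAct.res u⟩ q' → ∀ e q'', ¬ step q' e q''

section Impl

variable {Proc Var Val Op Ret : Type}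

def OpImpl.traces {p : Proc} (Iop : OpImpl Proc Var Val Op Ret p) :
    Set (List (Ev Proc Var Val Op Ret)) :=
  {π | ∃ q : Iop.State, LTSPath Iop.step Iop.init π q}

/-- An implementation of an object. -/
def Impl (Proc Var Val Op Ret : Type) : Type 1 :=
  (o : Op) → (p : Proc) → OpImpl Proc Var Val Op Ret p

/-- Per-process states of the system induced by an implementation: `none` is idle. -/
def SIPState (I : Impl Proc Var Val Op Ret) (p : Proc) : Type :=
  Option ((o : Op) × (I o p).State)

/-- Per-process transitions of the system induced by an implementation. -/
inductive SIPStep (I : Impl Proc Var Val Op Ret) (p : Proc) :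
    SIPState I p → Ev Proc Var Val Op Ret → SIPState I p → Prop where
  | invoke (o : Op) :
      SIPStep I p none ⟨p, EvAct.inv o⟩ (some ⟨o, (I o p).init⟩)
  | memStep {o : Op} {q q' : (I o p).State} (a : MemAct Var Val) :
      (I o p).step q ⟨p, EvAct.mem a⟩ q' →
      SIPStep I p (some ⟨o, q⟩) ⟨p, EvAct.mem a⟩ (some ⟨o, q'⟩)
  | resStep {o : Op} {q q' : (I o p).State} (u : Ret) :
      (I o p).step q ⟨p, EvAct.res u⟩ q' →
      SIPStep I p (some ⟨o, q⟩) ⟨p, EvAct.res u⟩ none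

def SIState (I : Impl Proc Var Val Op Ret) : Type :=
  (p : Proc) → SIPState I p

/-- The system induced by an implementation interleaves the processes. -/
inductive SIStep [DecidableEq Proc] (I : Impl Proc Var Val Op Ret) :
    SIState I → Ev Proc Var Val Op Ret → SIState I → Prop where
  | mk (s : SIState I) (p : Proc) (e : Ev Proc Var Val Op Ret) (t : SIPState I p) :
      SIPStep I p (s p) e t → SIStep I s e (Function.update s p t)

def ImplTraces [DecidableEq Proc] (I : Impl Proc Var Val Op Ret) :
    Set (List (Ev Proc Var Val Op Ret)) :=
  {π | ∃ s : SIState I, LTSPath (SIStep I) (fun _ => none) π s}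

/-- Histories generated by `I` after `π0` under memory model `M`. -/
def GenHist [DecidableEq Proc] (π0 : List (Ev Proc Var Val Op Ret))
    (I : Impl Proc Var Val Op Ret) (M : MemModel Proc Var Val) :
    Set (List (ObjEv Proc Op Ret)) :=
  {h | ∃ π : List (Ev Proc Var Val Op Ret),
      π0 ++ π ∈ ImplTraces I ∧ restrictObj π = h ∧
      restrictMem (π0 ++ π) ∈ M.OTraces M.init}

/-- Consistency: every complete generated history linearizes into the specification. -/
def Consistent [DecidableEq Proc] (I : Impl Proc Var Val Op Ret)
    (M : MemModel Proc Var Val) (Spec : Set (List (ObjEv Proc Op Ret))) : Prop :=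
  ∀ h ∈ GenHist [] I M, CompleteH h → LinInto Spec h

/-- Availability after `h0` w.r.t. `h`. -/
def AvailableAfter [DecidableEq Proc] [DecidableEq Var] [Zero Val]
    (I : Impl Proc Var Val Op Ret) (h0 h : List (ObjEv Proc Op Ret)) : Prop :=
  ∀ π0 ∈ ImplTraces I,
    restrictMem π0 ∈ (SCMModel Proc Var Val).OTraces (SCMModel Proc Var Val).init →
    restrictObj π0 = h0 →
    h ∈ GenHist π0 I (SCMModel Proc Var Val)

def SpecAvailable [DecidableEq Proc] [DecidableEq Var] [Zero Val]
    (I : Impl Proc Var Val Op Ret) (Spec : Set (List (ObjEv Proc Op Ret))) : Prop :=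
  ∀ h0 h : List (ObjEv Proc Op Ret), CompleteSeq h0 → CompleteSeq h →
    h0 ++ h ∈ Spec → AvailableAfter I h0 h

end Impl

/-! ### Fence insertion -/

section Fence

variable {Proc Var Val Op Ret : Type}

/-- `FenceInsertion π π'` : `π'` is obtained from `π` by inserting fence events. -/
inductive FenceInsertion : List (Ev Proc Var Val Op Ret) → List (Ev Proc Var Val Op Ret) → Prop where
  | nil : FenceInsertion [] []
  | keep (e : Ev Proc Var Val Op Ret) {π π' : List (Ev Proc Var Val Op Ret)} :
      FenceInsertion π π' → FenceInsertion (e :: π) (e :: π')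
  | fence (p : Proc) {π π' : List (Ev Proc Var Val Op Ret)} :
      FenceInsertion π π' → FenceInsertion π (⟨p, EvAct.mem MemAct.fence⟩ :: π')

/-- Every write is separated from every later read or response by a fence. -/
def FencedWrites (π : List (Ev Proc Var Val Op Ret)) : Prop :=
  ∀ (i j : ℕ) (ei ej : Ev Proc Var Val Op Ret),
    i < j → π[i]? = some ei → π[j]? = some ej →
    Ev.isWriteEv ei → (Ev.isReadEv ej ∨ Ev.isResEv ej) →
    ∃ (k : ℕ) (ek : Ev Proc Var Val Op Ret),
      i < k ∧ k < j ∧ π[k]? = some ek ∧ Ev.isFenceEv ek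

/-- Histories generated by `I` under `M` (from the initial state). -/
def GeneratedHistories [DecidableEq Proc] (I : Impl Proc Var Val Op Ret)
    (M : MemModel Proc Var Val) : Set (List (ObjEv Proc Op Ret)) :=
  {h | ∃ π ∈ ImplTraces I, restrictObj π = h ∧ restrictMem π ∈ M.OTraces M.init}

end Fence

/-! ### The snapshot object -/

inductive SnapOp (W : Type) : Type where
  | update (w : W)
  | scan

inductive SnapRet (Proc W : Type) : Type where
  | ack
  | vec (v : Proc → Option W)

section Snapshot

variable {Proc W : Type}

/-- The sequential specification of the single-writer snapshot object, threaded
through the current contents `s`. -/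
inductive SnapSpecFrom [DecidableEq Proc] :
    (Proc → Option W) → List (ObjEv Proc (SnapOp W) (SnapRet Proc W)) → Prop where
  | nil (s : Proc → Option W) : SnapSpecFrom s []
  | update (s : Proc → Option W) (p : Proc) (w : W)
      {h : List (ObjEv Proc (SnapOp W) (SnapRet Proc W))} :
      SnapSpecFrom (Function.update s p (some w)) h →
      SnapSpecFrom s (⟨p, ObjAct.inv (SnapOp.update w)⟩ :: ⟨p, ObjAct.res SnapRet.ack⟩ :: h)
  | scan (s : Proc → Option W) (p : Proc)
      {h : List (ObjEv Proc (SnapOp W) (SnapRet Proc W))} :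
      SnapSpecFrom s h →
      SnapSpecFrom s (⟨p, ObjAct.inv SnapOp.scan⟩ :: ⟨p, ObjAct.res (SnapRet.vec s)⟩ :: h)

def SnapSpec (Proc W : Type) [DecidableEq Proc] :
    Set (List (ObjEv Proc (SnapOp W) (SnapRet Proc W))) :=
  {h | SnapSpecFrom (fun _ => none) h}

end Snapshot

/-! ### Auxiliary lemmas for the merge theorem -/

section MergeAux

universe w w2

variable {α : Type w} {β : Type w2}

theorem shuffle_nil_left' {s t : List α} (h : Shuffle [] s t) : t = s := by
  generalize hz : ([] : List α) = z at h
  induction h with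
  | nil => rfl
  | left x h ih => simp at hz
  | right x h ih => rw [ih hz]

theorem shuffle_nil_right' {s t : List α} (h : Shuffle s [] t) : t = s := by
  generalize hz : ([] : List α) = z at h
  induction h with
  | nil => rfl
  | left x h ih => rw [ih hz]
  | right x h ih => simp at hz

theorem shuffle_refl_left (s : List α) : Shuffle s [] s := by
  induction s using List.reverseRecOn with
  | nil => exact Shuffle.nil
  | append_singleton t x ih => exact Shuffle.left x ih

theorem shuffle_append_full (a b : List α) : Shuffle a b (a ++ b) := by
  induction b using List.reverseRecOn with
  | nil => simpa using shuffle_refl_left a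
  | append_singleton t x ih =>
    have := Shuffle.right x ih
    rwa [List.append_assoc] at this

theorem shuffle_append_list {s1 s2 s : List α} (h : Shuffle s1 s2 s) (t : List α) :
    Shuffle (s1 ++ t) s2 (s ++ t) := by
  induction t using List.reverseRecOn with
  | nil => simpa using h
  | append_singleton t x ih =>
    have := Shuffle.left x ih
    rwa [List.append_assoc, List.append_assoc] at this

theorem shuffle_append_list_right {s1 s2 s : List α} (h : Shuffle s1 s2 s) (t : List α) :
    Shuffle s1 (s2 ++ t) (s ++ t) := by
  induction t using List.reverseRecOn with
  | nil => simpa using h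
  | append_singleton t x ih =>
    have := Shuffle.right x ih
    rwa [List.append_assoc, List.append_assoc] at this

theorem shuffle_filterMap (f : α → Option β) {a b c : List α} (h : Shuffle a b c) :
    Shuffle (a.filterMap f) (b.filterMap f) (c.filterMap f) := by
  induction h with
  | nil => exact Shuffle.nil
  | left x h ih =>
    rcases hfx : f x with _ | y
    · simpa [List.filterMap_append, hfx] using ih
    · simpa [List.filterMap_append, hfx] using Shuffle.left y ih
  | right x h ih =>
    rcases hfx : f x with _ | y
    · simpa [List.filterMap_append, hfx] using ih
    · simpa [List.filterMap_append, hfx] using Shuffle.right y ih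

theorem shuffle_filter (p : α → Bool) {a b c : List α} (h : Shuffle a b c) :
    Shuffle (a.filter p) (b.filter p) (c.filter p) := by
  induction h with
  | nil => exact Shuffle.nil
  | left x h ih =>
    by_cases hfx : p x
    · simpa [List.filter_append, hfx] using Shuffle.left x ih
    · simpa [List.filter_append, hfx] using ih
  | right x h ih =>
    by_cases hfx : p x
    · simpa [List.filter_append, hfx] using Shuffle.right x ih
    · simpa [List.filter_append, hfx] using ih

theorem filterMap_last_split (f : α → Option β) {a : List α} {s1 : List β} {x : β}
    (h : a.filterMap f = s1 ++ [x]) :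
    ∃ a1 e a2, a = a1 ++ e :: a2 ∧ a1.filterMap f = s1 ∧ f e = some x ∧
      a2.filterMap f = [] := by
  induction a using List.reverseRecOn with
  | nil => simp at h
  | append_singleton t e ih =>
    rcases hfe : f e with _ | y
    · rw [List.filterMap_append] at h
      simp only [hfe, List.filterMap_cons, List.filterMap_nil, List.append_nil] at h
      obtain ⟨a1, e', a2, rfl, h1, h2, h3⟩ := ih h
      exact ⟨a1, e', a2 ++ [e], by simp, h1, h2, by simp [List.filterMap_append, h3, hfe]⟩
    · rw [List.filterMap_append] at h
      simp only [hfe, List.filterMap_cons, List.filterMap_nil] at h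
      have h1 : t.filterMap f = s1 ∧ y = x := by
        constructor
        · have := congrArg (List.dropLast) h
          simpa using this
        · have := congrArg (List.getLast?) h
          simpa using this
      exact ⟨t, e, [], rfl, h1.1, by rw [hfe, h1.2], rfl⟩

theorem shuffle_lift (f : α → Option β) :
    ∀ {x y s : List β}, Shuffle x y s → ∀ a b : List α,
      a.filterMap f = x → b.filterMap f = y →
      ∃ c, Shuffle a b c ∧ c.filterMap f = s := by
  intro x y s h
  induction h with
  | nil =>
    intro a b ha hb
    exact ⟨a ++ b, shuffle_append_full a b, by simp [List.filterMap_append, ha, hb]⟩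
  | @left s1 s2 s x h ih =>
    intro a b ha hb
    obtain ⟨a1, e, a2, rfl, h1, h2, h3⟩ := filterMap_last_split f ha
    obtain ⟨c, hc, hcf⟩ := ih a1 b h1 hb
    refine ⟨(c ++ e :: a2), ?_, ?_⟩
    · have := shuffle_append_list (Shuffle.left e hc) a2
      simpa using this
    · simp [List.filterMap_append, hcf, h2, h3]
  | @right s1 s2 s x h ih =>
    intro a b ha hb
    obtain ⟨a1, e, a2, rfl, h1, h2, h3⟩ := filterMap_last_split f hb
    obtain ⟨c, hc, hcf⟩ := ih a a1 ha h1
    refine ⟨(c ++ e :: a2), ?_, ?_⟩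
    · have := shuffle_append_list_right (Shuffle.right e hc) a2
      simpa using this
    · simp [List.filterMap_append, hcf, h2, h3]

theorem exists_first_split (P : α → Prop) {l : List α} (hl : ∃ x ∈ l, P x) :
    ∃ A e B, l = A ++ e :: B ∧ P e ∧ ∀ x ∈ A, ¬ P x := by
  classical
  induction l with
  | nil => simp at hl
  | cons a t ih =>
    by_cases hpa : P a
    · exact ⟨[], a, t, rfl, hpa, by simp⟩
    · have ht : ∃ x ∈ t, P x := by
        rcases hl with ⟨x, hx, hPx⟩
        rcases List.mem_cons.mp hx with rfl | hx
        · exact absurd hPx hpa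
        · exact ⟨x, hx, hPx⟩
      obtain ⟨A, e, B, rfl, hPe, hA⟩ := ih ht
      refine ⟨a :: A, e, B, rfl, hPe, ?_⟩
      intro x hx
      rcases List.mem_cons.mp hx with rfl | hx
      · exact hpa
      · exact hA x hx

theorem ltspath_append {S : Type w} {L : Type w2} {step : S → L → S → Prop}
    {s s' s'' : S} {xs ys : List L} (h1 : LTSPath step s xs s')
    (h2 : LTSPath step s' ys s'') : LTSPath step s (xs ++ ys) s'' := by
  induction h1 with
  | nil => exact h2
  | cons hstep hpath ih => exact LTSPath.cons hstep (ih h2)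

theorem ltspath_append_split {S : Type w} {L : Type w2} {step : S → L → S → Prop}
    {s s'' : S} {xs ys : List L} (h : LTSPath step s (xs ++ ys) s'') :
    ∃ s', LTSPath step s xs s' ∧ LTSPath step s' ys s'' := by
  induction xs generalizing s with
  | nil => exact ⟨s, LTSPath.nil s, h⟩
  | cons x xs ih =>
    rcases h with _ | @⟨_, t, _, _, _, hstep, hpath⟩
    obtain ⟨s', h1, h2⟩ := ih hpath
    exact ⟨s', LTSPath.cons hstep h1, h2⟩

end MergeAux

section ReorderAux

universe w

variable {α : Type w} {R : α → α → Prop}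

theorem reorder_length {s s' : List α} (h : Reorder R s s') : s.length = s'.length := by
  obtain ⟨f, -, -⟩ := h
  simpa using Fintype.card_congr f

theorem reorder_refl (s : List α) : Reorder R s s :=
  ⟨Equiv.refl _, fun _ => rfl, fun _ _ h _ => h⟩

theorem reorder_nil_left {s' : List α} (h : Reorder R [] s') : s' = [] :=
  List.length_eq_zero_iff.mp (reorder_length h).symm

theorem reorder_mem {s s' : List α} (h : Reorder R s s') {x : α} :
    x ∈ s' ↔ x ∈ s := by
  obtain ⟨f, hget, -⟩ := h
  constructor
  · intro hx
    obtain ⟨j, hj⟩ := List.mem_iff_get.mp hx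
    have h2 := hget (f.symm j)
    rw [Equiv.apply_symm_apply, hj] at h2
    exact h2 ▸ List.get_mem _ _
  · intro hx
    obtain ⟨i, hi⟩ := List.mem_iff_get.mp hx
    rw [← hi, ← hget i]
    exact List.get_mem _ _

set_option maxRecDepth 8000 in
theorem reorder_cons_split {a : α} {g s' : List α} (h : Reorder R (a :: g) s') :
    ∃ (j : ℕ) (hj : j < s'.length), s'[j] = a ∧
      (∀ (i : ℕ) (hi : i < s'.length), i < j → ¬ R a s'[i]) ∧
      Reorder R g (s'.take j ++ s'.drop (j + 1)) := by
  obtain ⟨f, hget, hmono⟩ := h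
  set n := g.length with hn
  have hlen : s'.length = n + 1 := by
    have := Fintype.card_congr f
    simpa using this.symm
  have hcast : (a :: g).length = n + 1 := by simp [hn]
  let F : Fin (n + 1) ≃ Fin (n + 1) :=
    ((finCongr hcast).symm.trans f).trans (finCongr hlen)
  have hFget : ∀ i : Fin (n + 1),
      s'[((F i) : ℕ)]'(by rw [hlen]; exact (F i).isLt) = (a :: g)[(i : ℕ)]'(by omega) := by
    intro i
    have h2 := hget ((finCongr hcast).symm i)
    simp only [F, List.get_eq_getElem, Equiv.trans_apply, finCongr_apply, Fin.coe_cast] at h2 ⊢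
    exact h2
  have hFmono : ∀ i k : Fin (n + 1), i < k →
      R ((a :: g)[(i : ℕ)]'(by omega)) ((a :: g)[(k : ℕ)]'(by omega)) → F i < F k := by
    intro i k hik hr
    have h2 := hmono ((finCongr hcast).symm i) ((finCongr hcast).symm k)
      (by
        rw [Fin.lt_def]
        simp only [finCongr_symm, finCongr_apply, Fin.coe_cast]
        exact hik)
      (by
        simp only [List.get_eq_getElem, finCongr_symm, finCongr_apply, Fin.coe_cast]
        exact hr)
    rw [Fin.lt_def]
    simp only [F, Equiv.trans_apply, finCongr_apply, Fin.coe_cast]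
    exact h2
  set j0 : Fin (n + 1) := F 0 with hj0
  refine ⟨(j0 : ℕ), by rw [hlen]; exact j0.isLt, ?_, ?_, ?_⟩
  · have h2 := hFget 0
    rw [← hj0] at h2
    simpa using h2
  · intro i hi hij hR
    have hi' : i < n + 1 := by rw [hlen] at hi; exact hi
    set i' : Fin (n + 1) := ⟨i, hi'⟩ with hi'def
    have hne : F.symm i' ≠ 0 := by
      intro hcon
      have h3 : F 0 = i' := by rw [← hcon, Equiv.apply_symm_apply]
      rw [← hj0] at h3
      have : (j0 : ℕ) = i := congrArg Fin.val h3
      omega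
    have h0k : (0 : Fin (n + 1)) < F.symm i' := Fin.pos_of_ne_zero hne
    have hgi : s'[i]'hi = (a :: g)[((F.symm i' : Fin (n + 1)) : ℕ)]'(by omega) := by
      have h2 := hFget (F.symm i')
      rw [Equiv.apply_symm_apply] at h2
      exact h2
    have h4 := hFmono 0 (F.symm i') h0k (by
      have ha0 : (a :: g)[((0 : Fin (n + 1)) : ℕ)]'(by omega) = a := by simp
      rw [ha0, ← hgi]
      exact hR)
    rw [Equiv.apply_symm_apply, ← hj0] at h4
    have : (j0 : ℕ) < i := h4
    omega
  · have hjle : (j0 : ℕ) ≤ n := Nat.lt_succ_iff.mp j0.isLt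
    have hlen2 : (s'.take (j0 : ℕ) ++ s'.drop ((j0 : ℕ) + 1)).length = n := by
      simp only [List.length_append, List.length_take, List.length_drop, hlen]
      omega
    let G : Option (Fin n) ≃ Option (Fin n) :=
      ((finSuccEquiv' 0).symm.trans F).trans (finSuccEquiv' j0)
    have hGnone : G none = none := by
      have h1 : (finSuccEquiv' (0 : Fin (n + 1))).symm none = 0 := by
        rw [Equiv.symm_apply_eq, finSuccEquiv'_at]
      simp only [G, Equiv.trans_apply, h1, ← hj0, finSuccEquiv'_at]
    let f2 : Fin n ≃ Fin n := G.removeNone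
    have hf2 : ∀ i : Fin n, F (Fin.succ i) = j0.succAbove (f2 i) := by
      intro i
      have hne : G (some i) ≠ none := fun hcon =>
        (by simp : (some i : Option (Fin n)) ≠ none) (G.injective (hcon.trans hGnone.symm))
      obtain ⟨y, hy⟩ := Option.ne_none_iff_exists'.mp hne
      have h1 : some (f2 i) = G (some i) := Equiv.removeNone_some G ⟨y, hy⟩
      have h2 : (finSuccEquiv' (0 : Fin (n + 1))).symm (some i) = Fin.succ i := by
        rw [Equiv.symm_apply_eq, ← Fin.zero_succAbove, finSuccEquiv'_succAbove]
      have h3 : G (some i) = finSuccEquiv' j0 (F (Fin.succ i)) := by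
        simp only [G, Equiv.trans_apply, h2]
      have h4 : finSuccEquiv' j0 (j0.succAbove (f2 i)) = finSuccEquiv' j0 (F (Fin.succ i)) := by
        rw [finSuccEquiv'_succAbove, h1, h3]
      exact ((finSuccEquiv' j0).injective h4).symm
    have hsaval : ∀ i : Fin n, ((j0.succAbove i : Fin (n + 1)) : ℕ) =
        if (i : ℕ) < (j0 : ℕ) then (i : ℕ) else (i : ℕ) + 1 := by
      intro i
      by_cases hkj : (i : ℕ) < (j0 : ℕ)
      · rw [if_pos hkj, Fin.succAbove_of_castSucc_lt]
        · rfl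
        · exact hkj
      · rw [if_neg hkj, Fin.succAbove_of_le_castSucc]
        · rfl
        · exact Nat.le_of_not_lt hkj
    have hs2get : ∀ (k : Fin n),
        (s'.take (j0 : ℕ) ++ s'.drop ((j0 : ℕ) + 1))[(k : ℕ)]'(by omega) =
          s'[((j0.succAbove k : Fin (n + 1)) : ℕ)]'(by rw [hlen]; exact (j0.succAbove k).isLt) := by
      intro k
      have herase : s'.take (j0 : ℕ) ++ s'.drop ((j0 : ℕ) + 1) = s'.eraseIdx (j0 : ℕ) :=
        (List.eraseIdx_eq_take_drop_succ s' _).symm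
      simp only [herase]
      rw [List.getElem_eraseIdx]
      by_cases hkj : (k : ℕ) < (j0 : ℕ)
      · rw [dif_pos hkj]
        have := hsaval k
        rw [if_pos hkj] at this
        congr 1
        omega
      · rw [dif_neg hkj]
        have := hsaval k
        rw [if_neg hkj] at this
        congr 1
        omega
    refine ⟨f2.trans (finCongr hlen2.symm), ?_, ?_⟩
    · intro i
      have h5 := hFget (Fin.succ i)
      rw [hf2 i] at h5
      have h6 := hs2get (f2 i)
      simp only [List.get_eq_getElem, Equiv.trans_apply, finCongr_apply, Fin.coe_cast]
      rw [h6, h5]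
      simp only [Fin.val_succ, List.getElem_cons_succ]
    · intro i k hik hr
      have h7 := hFmono (Fin.succ i) (Fin.succ k)
        (by rw [Fin.lt_def]; simpa using hik)
        (by
          simp only [Fin.val_succ, List.getElem_cons_succ]
          simpa [List.get_eq_getElem] using hr)
      rw [hf2 i, hf2 k] at h7
      have h8 := Fin.succAbove_lt_succAbove_iff.mp h7
      rw [Fin.lt_def]
      simp only [Equiv.trans_apply, finCongr_apply, Fin.coe_cast]
      exact h8

theorem reorder_filter_eq {s s' : List α} (h : Reorder R s s')
    (pred : α → Bool) (htot : ∀ a b, pred a → pred b → R a b) :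
    s'.filter pred = s.filter pred := by
  induction s generalizing s' with
  | nil => rw [reorder_nil_left h]
  | cons a t ih =>
    obtain ⟨j, hj, hja, hbefore, h'⟩ := reorder_cons_split h
    have htail := ih h'
    have hrepr : s' = s'.take j ++ a :: s'.drop (j + 1) := by
      conv_lhs => rw [← List.take_append_drop j s']
      rw [List.drop_eq_getElem_cons hj, hja]
    have htake : ∀ x ∈ s'.take j, pred a = true → pred x = false := by
      intro x hx hpa
      obtain ⟨i, hi, hix⟩ := List.mem_iff_getElem.mp hx
      have hilen : i < s'.length := by
        have := hi
        simp only [List.length_take] at this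
        omega
      have hij : i < j := by
        have := hi
        simp only [List.length_take] at this
        omega
      have hnr := hbefore i hilen hij
      by_contra hpx
      apply hnr
      have hx' : s'[i]'hilen = x := by
        rw [← hix, List.getElem_take]
      rw [hx']
      exact htot a x hpa (by simpa using hpx)
    rw [List.filter_append] at htail
    by_cases hpa : pred a = true
    · have hftake : (s'.take j).filter pred = [] := by
        rw [List.filter_eq_nil_iff]
        intro x hx
        simp [htake x hx hpa]
      conv_lhs => rw [hrepr]
      rw [List.filter_append, hftake, List.filter_cons_of_pos hpa,
        List.filter_cons_of_pos hpa]
      rw [hftake] at htail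
      simp only [List.nil_append] at htail ⊢
      rw [htail]
    · have hpa' : pred a = false := by simpa using hpa
      conv_lhs => rw [hrepr]
      rw [List.filter_append, List.filter_cons_of_neg (by simp [hpa']),
        List.filter_cons_of_neg (by simp [hpa'])]
      rw [← htail]

end ReorderAux

theorem reduceOption_map_some' {A : Type} (l : List A) :
    (l.map some).reduceOption = l := by
  induction l with
  | nil => rfl
  | cons e l ih => simp [List.reduceOption_cons_of_some, ih]

section DomainAux

variable {Proc Var Val Op Ret : Type}

@[simp] theorem toObj_mem_ev (p : Proc) (a : MemAct Var Val) :
    (⟨p, EvAct.mem a⟩ : Ev Proc Var Val Op Ret).toObj = none := rfl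
@[simp] theorem toObj_inv_ev (p : Proc) (o : Op) :
    (⟨p, EvAct.inv o⟩ : Ev Proc Var Val Op Ret).toObj = some ⟨p, ObjAct.inv o⟩ := rfl
@[simp] theorem toObj_res_ev (p : Proc) (u : Ret) :
    (⟨p, EvAct.res u⟩ : Ev Proc Var Val Op Ret).toObj = some ⟨p, ObjAct.res u⟩ := rfl
@[simp] theorem toMem_mem_ev (p : Proc) (a : MemAct Var Val) :
    (⟨p, EvAct.mem a⟩ : Ev Proc Var Val Op Ret).toMem = some ⟨p, a⟩ := rfl
@[simp] theorem toMem_inv_ev (p : Proc) (o : Op) :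
    (⟨p, EvAct.inv o⟩ : Ev Proc Var Val Op Ret).toMem = none := rfl
@[simp] theorem toMem_res_ev (p : Proc) (u : Ret) :
    (⟨p, EvAct.res u⟩ : Ev Proc Var Val Op Ret).toMem = none := rfl

/-- Case analysis of a general event. -/
theorem ev_cases (e : Ev Proc Var Val Op Ret) :
    (∃ a, e = ⟨e.proc, EvAct.mem a⟩ ∧ e.toObj = none ∧ e.toMem = some ⟨e.proc, a⟩) ∨
    (∃ o', e.toObj = some o' ∧ o'.proc = e.proc ∧ e.toMem = none) := by
  rcases e with ⟨p, a⟩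
  cases a with
  | mem a => exact Or.inl ⟨a, rfl, rfl, rfl⟩
  | inv o => exact Or.inr ⟨⟨p, ObjAct.inv o⟩, rfl, rfl, rfl⟩
  | res u => exact Or.inr ⟨⟨p, ObjAct.res u⟩, rfl, rfl, rfl⟩

theorem toObj_proc {e : Ev Proc Var Val Op Ret} {o : ObjEv Proc Op Ret}
    (h : e.toObj = some o) : o.proc = e.proc := by
  rcases ev_cases e with ⟨a, -, hno, -⟩ | ⟨o', ho, hop, -⟩
  · rw [hno] at h; exact absurd h (by simp)
  · rw [ho] at h; cases h; exact hop

theorem toMem_proc {e : Ev Proc Var Val Op Ret} {m : MemEv Proc Var Val}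
    (h : e.toMem = some m) : m.proc = e.proc := by
  rcases ev_cases e with ⟨a, -, -, hm⟩ | ⟨o', -, -, hm⟩
  · rw [hm] at h; cases h; rfl
  · rw [hm] at h; exact absurd h (by simp)

theorem restrictObj_append (l1 l2 : List (Ev Proc Var Val Op Ret)) :
    restrictObj (l1 ++ l2) = restrictObj l1 ++ restrictObj l2 :=
  List.filterMap_append

theorem restrictMem_append (l1 l2 : List (Ev Proc Var Val Op Ret)) :
    restrictMem (l1 ++ l2) = restrictMem l1 ++ restrictMem l2 :=
  List.filterMap_append

theorem restrictObj_filter_proc [DecidableEq Proc] (p : Proc)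
    (l : List (Ev Proc Var Val Op Ret)) :
    restrictObj (l.filter (fun e => decide (e.proc = p))) =
      (restrictObj l).filter (fun e => decide (e.proc = p)) := by
  induction l with
  | nil => rfl
  | cons e l ih =>
    simp only [restrictObj] at ih ⊢
    rcases ev_cases e with ⟨a, he, hno, hm⟩ | ⟨o', ho, hop, hm⟩
    · by_cases hp : e.proc = p <;>
        simp [List.filter_cons, List.filterMap_cons, hno, hp, ih]
    · by_cases hp : e.proc = p <;>
        simp [List.filter_cons, List.filterMap_cons, ho, hop, hp, ih]

theorem restrictMem_filter_proc [DecidableEq Proc] (p : Proc)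
    (l : List (Ev Proc Var Val Op Ret)) :
    restrictMem (l.filter (fun e => decide (e.proc = p))) =
      (restrictMem l).filter (fun e => decide (e.proc = p)) := by
  induction l with
  | nil => rfl
  | cons e l ih =>
    simp only [restrictMem] at ih ⊢
    rcases ev_cases e with ⟨a, he, hno, hm⟩ | ⟨o', ho, hop, hm⟩
    · by_cases hp : e.proc = p <;>
        simp [List.filter_cons, List.filterMap_cons, hm, hp, ih]
    · by_cases hp : e.proc = p <;>
        simp [List.filter_cons, List.filterMap_cons, hm, hp, ih]

theorem sipstep_proc {I : Impl Proc Var Val Op Ret} {p : Proc}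
    {q : SIPState I p} {e : Ev Proc Var Val Op Ret} {q'} (h : SIPStep I p q e q') :
    e.proc = p := by
  cases h <;> rfl

theorem sistep_filter [DecidableEq Proc] {I : Impl Proc Var Val Op Ret}
    {s : SIState I} {π : List (Ev Proc Var Val Op Ret)} {s'}
    (h : LTSPath (SIStep I) s π s') (p : Proc) :
    LTSPath (SIPStep I p) (s p) (π.filter (fun e => decide (e.proc = p))) (s' p) := by
  induction h with
  | nil s => exact LTSPath.nil _
  | @cons s s' s'' l ls hstep hpath ih =>
    cases hstep with
    | mk p0 e0 t hstep0 =>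
    by_cases hp : p0 = p
    · subst hp
      rw [List.filter_cons_of_pos (by simp [sipstep_proc hstep0])]
      refine LTSPath.cons hstep0 ?_
      rw [show Function.update s p0 t p0 = t from
        Function.update_self (β := fun a => SIPState I a) (a := p0) (v := t) (f := s)] at ih; exact ih
    · rw [List.filter_cons_of_neg (by simp [sipstep_proc hstep0]; exact hp)]
      have h2 : (Function.update s p0 t) p = s p := Function.update_of_ne (Ne.symm hp) _ _
      rwa [h2] at ih

theorem sistep_of_components [DecidableEq Proc] {I : Impl Proc Var Val Op Ret} :
    ∀ (π : List (Ev Proc Var Val Op Ret)) (s : SIState I),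
    (∀ p, ∃ tp, LTSPath (SIPStep I p) (s p) (π.filter (fun e => decide (e.proc = p))) tp) →
    ∃ s', LTSPath (SIStep I) s π s' := by
  intro π
  induction π with
  | nil => intro s _; exact ⟨s, LTSPath.nil s⟩
  | cons e π ih =>
    intro s h
    obtain ⟨tp, hp⟩ := h e.proc
    rw [List.filter_cons_of_pos (by simp)] at hp
    rcases hp with _ | @⟨_, t, _, _, _, hstep, hpath⟩
    have hstep' : SIStep I s e (Function.update s e.proc t) := SIStep.mk s e.proc e t hstep
    have hcomp : ∀ p, ∃ tp', LTSPath (SIPStep I p) ((Function.update s e.proc t) p)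
        (π.filter (fun e => decide (e.proc = p))) tp' := by
      intro p
      by_cases hpp : p = e.proc
      · subst hpp
        exact ⟨tp, by
          rw [show Function.update s e.proc t e.proc = t from
            Function.update_self (β := fun a => SIPState I a) (a := e.proc) (v := t) (f := s)]; exact hpath⟩
      · obtain ⟨tq, hq⟩ := h p
        rw [List.filter_cons_of_neg (by simp; exact fun hc => hpp hc.symm)] at hq
        refine ⟨tq, ?_⟩
        have h3 : (Function.update s e.proc t) p = s p := Function.update_of_ne hpp _ _
        rwa [h3]
    obtain ⟨s', hs'⟩ := ih (Function.update s e.proc t) hcomp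
    exact ⟨s', LTSPath.cons hstep' hs'⟩

theorem mem_impltraces_iff [DecidableEq Proc] {I : Impl Proc Var Val Op Ret}
    {π : List (Ev Proc Var Val Op Ret)} :
    π ∈ ImplTraces I ↔
      ∀ p, ∃ tp, LTSPath (SIPStep I p) none (π.filter (fun e => decide (e.proc = p))) tp := by
  constructor
  · rintro ⟨s, hs⟩ p
    exact ⟨s p, sistep_filter hs p⟩
  · intro h
    exact sistep_of_components π (fun _ => none) h

/-- Shape of a single process's event sequence. -/
inductive PShape (p : Proc) : Bool → List (Ev Proc Var Val Op Ret) → Prop where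
  | nil (b : Bool) : PShape p b []
  | inv (o : Op) {l} : PShape p false l → PShape p true (⟨p, EvAct.inv o⟩ :: l)
  | mem (a : MemAct Var Val) {l} : PShape p false l → PShape p false (⟨p, EvAct.mem a⟩ :: l)
  | res (u : Ret) {l} : PShape p true l → PShape p false (⟨p, EvAct.res u⟩ :: l)

theorem sip_shape {I : Impl Proc Var Val Op Ret} {p : Proc} {q l t}
    (h : LTSPath (SIPStep I p) q l t) : PShape p q.isNone l := by
  induction h with
  | nil => exact PShape.nil _
  | cons hstep hpath ih =>
    cases hstep with
    | invoke o => exact PShape.inv o (by simpa using ih)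
    | memStep a h => exact PShape.mem a (by simpa using ih)
    | resStep u h => exact PShape.res u (by simpa using ih)

theorem sip_busy_reach {I : Impl Proc Var Val Op Ret} {p : Proc}
    (l : List (Ev Proc Var Val Op Ret)) :
    ∀ {o : Op} {st : (I o p).State} {t} {u : Ret} {h' : List (ObjEv Proc Op Ret)},
    LTSPath (SIPStep I p) (some ⟨o, st⟩) l t →
    restrictObj l = ⟨p, ObjAct.res u⟩ :: h' →
    ∃ l2, LTSPath (SIPStep I p) none l2 t ∧ restrictObj l2 = h' ∧ l2.length < l.length := by
  induction l with
  | nil =>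
    intro o st t u h' hpath hobj
    simp [restrictObj] at hobj
  | cons e l ih =>
    intro o st t u h' hpath hobj
    rcases hpath with _ | @⟨_, s1, _, _, _, hstep, hpath⟩
    cases hstep with
    | memStep a hst =>
      have hobj' : restrictObj l = ⟨p, ObjAct.res u⟩ :: h' := by
        simpa [restrictObj, List.filterMap_cons] using hobj
      obtain ⟨l2, h1, h2, h3⟩ := ih hpath hobj'
      exact ⟨l2, h1, h2, by simp only [List.length_cons]; omega⟩
    | resStep u' hst =>
      have hobj' : (⟨p, ObjAct.res u'⟩ : ObjEv Proc Op Ret) = ⟨p, ObjAct.res u⟩ ∧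
          restrictObj l = h' := by
        simpa [restrictObj, List.filterMap_cons] using hobj
      exact ⟨l, hpath, hobj'.2, by simp only [List.length_cons]; omega⟩

theorem completeSeq_cons_inv {x : ObjEv Proc Op Ret} {L : List (ObjEv Proc Op Ret)}
    (h : CompleteSeq (x :: L)) :
    ∃ p o u h', x = ⟨p, ObjAct.inv o⟩ ∧ L = ⟨p, ObjAct.res u⟩ :: h' ∧ CompleteSeq h' := by
  cases h with
  | cons p o u hcs => exact ⟨p, o, u, _, rfl, rfl, hcs⟩

theorem sip_none {I : Impl Proc Var Val Op Ret} {p : Proc} :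
    ∀ (n : ℕ) (l : List (Ev Proc Var Val Op Ret)), l.length ≤ n →
    ∀ {t}, LTSPath (SIPStep I p) none l t → CompleteSeq (restrictObj l) → t = none := by
  intro n
  induction n with
  | zero =>
    intro l hl t hpath _
    have hnil : l = [] := List.length_eq_zero_iff.mp (Nat.le_zero.mp hl)
    subst hnil
    cases hpath
    rfl
  | succ n ihn =>
    intro l hl t hpath hcs
    rcases l with _ | ⟨e, l'⟩
    · cases hpath
      rfl
    · rcases hpath with _ | @⟨_, s1, _, _, _, hstep, hpath⟩
      cases hstep with
      | invoke o =>
        have hobj : restrictObj (⟨p, EvAct.inv o⟩ :: l') =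
            (⟨p, ObjAct.inv o⟩ : ObjEv Proc Op Ret) :: restrictObj l' := by
          simp [restrictObj, List.filterMap_cons]
        rw [hobj] at hcs
        obtain ⟨p', o', u, h2, hx, hL, hcs'⟩ := completeSeq_cons_inv hcs
        injection hx with hp ha
        subst hp
        obtain ⟨l2, hpath2, hobj2, hlen2⟩ := sip_busy_reach l' hpath hL
        refine ihn l2 ?_ hpath2 (hobj2 ▸ hcs')
        simp at hl
        omega

theorem pshape_busy_head_res {p : Proc} :
    ∀ (l : List (Ev Proc Var Val Op Ret)), PShape p false l →
    ∀ {e : ObjEv Proc Op Ret}, (restrictObj l).head? = some e →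
    ∃ u : Ret, e = ⟨p, ObjAct.res u⟩ := by
  intro l
  induction l with
  | nil => intro _ e he; simp [restrictObj] at he
  | cons x l ih =>
    intro hl e he
    cases hl with
    | mem a h => exact ih h (by simpa [restrictObj, List.filterMap_cons] using he)
    | res u h =>
      refine ⟨u, ?_⟩
      have h2 := he
      simp only [restrictObj, List.filterMap_cons, toObj_res_ev, List.head?_cons,
        Option.some.injEq] at h2
      exact h2.symm

theorem pshape_true_head {p : Proc} {x : Ev Proc Var Val Op Ret} {l}
    (hl : PShape p true (x :: l)) :
    ∃ o : Op, x = ⟨p, EvAct.inv o⟩ ∧ PShape p false l := by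
  cases hl with
  | inv o h => exact ⟨o, rfl, h⟩

theorem scm_step_some [DecidableEq Var] {m : Var → Val} {l} {m'}
    (h : SCMStep Proc Var Val m l m') :
    ∃ e, l = some e := by
  cases h <;> exact ⟨_, rfl⟩

theorem scm_path_labels [DecidableEq Var] {π : List (Option (MemEv Proc Var Val))} {m m'}
    (h : LTSPath (SCMStep Proc Var Val) m π m') : π = π.reduceOption.map some := by
  induction h with
  | nil => rfl
  | cons hstep hpath ih =>
    obtain ⟨e, rfl⟩ := scm_step_some hstep
    simp only [List.reduceOption_cons_of_some, List.map_cons]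
    rw [← ih]

theorem scm_det [DecidableEq Var] {m : Var → Val} {l} {m1 m2}
    (h1 : SCMStep Proc Var Val m l m1) (h2 : SCMStep Proc Var Val m l m2) : m1 = m2 := by
  cases h1 <;> cases h2 <;> rfl

theorem scm_path_det [DecidableEq Var] :
    ∀ {ls : List (Option (MemEv Proc Var Val))} {m m1 m2},
    LTSPath (SCMStep Proc Var Val) m ls m1 → LTSPath (SCMStep Proc Var Val) m ls m2 →
    m1 = m2 := by
  intro ls
  induction ls with
  | nil =>
    intro m m1 m2 h1 h2
    rcases h1 with _ | _
    rcases h2 with _ | _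
    rfl
  | cons l ls ih =>
    intro m m1 m2 h1 h2
    rcases h1 with _ | @⟨_, s1, _, _, _, hstep1, hpath1⟩
    rcases h2 with _ | @⟨_, s2, _, _, _, hstep2, hpath2⟩
    rw [scm_det hstep1 hstep2] at hpath1
    exact ih hpath1 hpath2

theorem taureach_path {M : MemModel Proc Var Val} {q q'} (h : TauReach M q q') :
    ∃ π, LTSPath M.step q π q' ∧ π.reduceOption = [] := by
  induction h with
  | refl => exact ⟨[], LTSPath.nil q, rfl⟩
  | tail hab hbc ih =>
    obtain ⟨π, hp, hr⟩ := ih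
    exact ⟨π ++ [none], ltspath_append hp (LTSPath.cons hbc (LTSPath.nil _)),
      by simp [List.reduceOption_append, hr]⟩

theorem scm_otraces_iff [DecidableEq Var] [Zero Val]
    {σ : List (MemEv Proc Var Val)} {m : Var → Val} :
    σ ∈ (SCMModel Proc Var Val).OTraces m ↔
      ∃ m', LTSPath (SCMStep Proc Var Val) m (σ.map some) m' := by
  constructor
  · rintro ⟨π, m', hp, hr⟩
    have hp' : LTSPath (SCMStep Proc Var Val) m π m' := hp
    have h2 := scm_path_labels hp'
    rw [hr] at h2
    exact ⟨m', h2 ▸ hp'⟩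
  · rintro ⟨m', hp⟩
    exact ⟨σ.map some, m', hp, reduceOption_map_some' σ⟩

theorem simlift {M : MemModel Proc Var Val} [DecidableEq Var]
    (R : (Var → Val) → M.State → Prop)
    (hsim : ∀ m q, R m q → ∀ (l : Option (MemEv Proc Var Val)) (m' : Var → Val),
      SCMStep Proc Var Val m l m' →
      ∃ q1 q' : M.State, M.step q l q1 ∧ TauReach M q1 q' ∧ M.Stable q' ∧ R m' q') :
    ∀ (σ : List (MemEv Proc Var Val)) {m m'},
      LTSPath (SCMStep Proc Var Val) m (σ.map some) m' →
      ∀ {q}, R m q →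
      ∃ q' π, LTSPath M.step q π q' ∧ π.reduceOption = σ ∧ R m' q' := by
  intro σ
  induction σ with
  | nil =>
    intro m m' hp q hq
    rcases hp with _ | _
    exact ⟨q, [], LTSPath.nil q, rfl, hq⟩
  | cons e σ ih =>
    intro m m' hp q hq
    rcases hp with _ | @⟨_, m1, _, _, _, hstep, hpath⟩
    obtain ⟨q1, q2, hq1, htau, hstable, hR⟩ := hsim m q hq _ _ hstep
    obtain ⟨πτ, hπτ, hτnil⟩ := taureach_path htau
    obtain ⟨q', π', hp', hr', hR'⟩ := ih hpath hR
    exact ⟨q', some e :: (πτ ++ π'), LTSPath.cons hq1 (ltspath_append hπτ hp'),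
      by simp [List.reduceOption_append, hτnil, hr'], hR'⟩

theorem completeSeq_append {h1 h2 : List (ObjEv Proc Op Ret)}
    (hh1 : CompleteSeq h1) (hh2 : CompleteSeq h2) : CompleteSeq (h1 ++ h2) := by
  induction hh1 with
  | nil => exact hh2
  | cons p o u h ih => exact CompleteSeq.cons p o u ih

theorem completeSeq_filter [DecidableEq Proc] (p : Proc) {h : List (ObjEv Proc Op Ret)}
    (hh : CompleteSeq h) :
    CompleteSeq (h.filter (fun e => decide (e.proc = p))) := by
  induction hh with
  | nil => exact CompleteSeq.nil
  | cons p' o u h ih =>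
    by_cases hp : p' = p
    · rw [List.filter_cons_of_pos (by simp [hp]), List.filter_cons_of_pos (by simp [hp])]
      exact CompleteSeq.cons p' o u ih
    · rw [List.filter_cons_of_neg (by simp [hp]), List.filter_cons_of_neg (by simp [hp])]
      exact ih

theorem completeSeq_getLast_res {h : List (ObjEv Proc Op Ret)} (hh : CompleteSeq h) :
    h = [] ∨ ∃ e : ObjEv Proc Op Ret, h.getLast? = some e ∧ e.act.isRes := by
  induction hh with
  | nil => exact Or.inl rfl
  | cons p o u h ih =>
    right
    rcases ih with rfl | ⟨e, he, hres⟩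
    · exact ⟨⟨p, ObjAct.res u⟩, rfl, trivial⟩
    · rcases h with _ | ⟨x, h'⟩
      · simp at he
      · exact ⟨e, by rw [List.getLast?_cons_cons, List.getLast?_cons_cons]; exact he, hres⟩

end DomainAux

section Scheduler

variable {Proc Var Val Op Ret : Type}

theorem reorder_linRel_split {e' : ObjEv Proc Op Ret} {g' : List (ObjEv Proc Op Ret)}
    {A B : List (Ev Proc Var Val Op Ret)} {ev : Ev Proc Var Val Op Ret}
    {eo : ObjEv Proc Op Ret}
    (hro : Reorder linRel (e' :: g') (restrictObj (A ++ ev :: B)))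
    (hev : ev.toObj = some eo) (hproc : eo.proc = e'.proc)
    (hA : ∀ x ∈ A, ∀ y : ObjEv Proc Op Ret, x.toObj = some y → y.proc ≠ e'.proc) :
    eo = e' ∧ (∀ y ∈ restrictObj A, ¬ linRel e' y) ∧
      Reorder linRel g' (restrictObj (A ++ B)) := by
  obtain ⟨j, hj, hja, hbefore, hro'⟩ := reorder_cons_split hro
  have hobj : restrictObj (A ++ ev :: B) = restrictObj A ++ eo :: restrictObj B := by
    rw [restrictObj_append]
    simp [restrictObj, List.filterMap_cons, hev]
  have hobj2 : restrictObj (A ++ ev :: B) = (restrictObj A ++ [eo]) ++ restrictObj B := by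
    rw [hobj]; simp
  set ℓ := (restrictObj A).length with hℓ
  have hℓlt : ℓ < (restrictObj (A ++ ev :: B)).length := by
    rw [hobj]; simp [hℓ]
  have hgetℓ : (restrictObj (A ++ ev :: B))[ℓ]'hℓlt = eo := by
    have h1 := List.getElem_of_eq hobj2 hℓlt
    rw [h1, List.getElem_append_left (by simp [hℓ])]
    exact List.getElem_concat_length rfl _
  have hmemA : ∀ (i : ℕ) (hi : i < ℓ),
      (restrictObj (A ++ ev :: B))[i]'(by omega) ∈ restrictObj A := by
    intro i hi
    have h1 := List.getElem_of_eq hobj (show i < (restrictObj (A ++ ev :: B)).length by omega)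
    rw [h1, List.getElem_append_left (by omega)]
    exact List.getElem_mem _
  have hjℓ : j = ℓ := by
    rcases Nat.lt_trichotomy j ℓ with hlt | heq | hgt
    · exfalso
      have hmem := hmemA j hlt
      rw [hja] at hmem
      obtain ⟨x, hx, hxo⟩ := List.mem_filterMap.mp hmem
      exact hA x hx e' hxo rfl
    · exact heq
    · exfalso
      apply hbefore ℓ hℓlt hgt
      rw [hgetℓ]
      exact Or.inl (hproc.symm)
  subst hjℓ
  have heo : eo = e' := by rw [← hgetℓ, hja]
  refine ⟨heo, ?_, ?_⟩
  · intro y hy hlin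
    obtain ⟨i, hi, hiy⟩ := List.mem_iff_getElem.mp hy
    apply hbefore i (by omega) (by omega)
    have h1 := List.getElem_of_eq hobj (show i < (restrictObj (A ++ ev :: B)).length by omega)
    rw [h1, List.getElem_append_left (by omega)]
    rw [hiy]
    exact hlin
  · have htake : (restrictObj (A ++ ev :: B)).take ℓ = restrictObj A := by
      rw [hobj]
      exact List.take_left
    have hdrop : (restrictObj (A ++ ev :: B)).drop (ℓ + 1) = restrictObj B := by
      rw [hobj2]
      have : ℓ + 1 = (restrictObj A ++ [eo]).length := by simp [hℓ]
      rw [this]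
      exact List.drop_left
    rw [htake, hdrop] at hro'
    rwa [restrictObj_append]

theorem mem_filterMap_of_prefix {l l' : List (Ev Proc Var Val Op Ret)}
    (h : l <+: l') {y : ObjEv Proc Op Ret} (hy : y ∈ restrictObj l) :
    y ∈ restrictObj l' := by
  obtain ⟨x, hx, hxo⟩ := List.mem_filterMap.mp hy
  exact List.mem_filterMap.mpr ⟨x, h.subset hx, hxo⟩

theorem scheduler [DecidableEq Proc] (I : Impl Proc Var Val Op Ret) :
    ∀ (n : ℕ) (π : List (Ev Proc Var Val Op Ret)) (g : List (ObjEv Proc Op Ret)),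
    π.length ≤ n →
    (∀ p, ∃ b, PShape p b (π.filter (fun e => decide (e.proc = p)))) →
    Reorder linRel g (restrictObj π) →
    ∃ π1 : List (Ev Proc Var Val Op Ret),
      (∀ p, π1.filter (fun e => decide (e.proc = p)) =
        π.filter (fun e => decide (e.proc = p))) ∧
      restrictMem π1 = restrictMem π ∧ restrictObj π1 = g := by
  intro n
  induction n with
  | zero =>
    intro π g hlen hsh hro
    have hπ : π = [] := List.length_eq_zero_iff.mp (Nat.le_zero.mp hlen)
    subst hπ
    have hg : g = [] := by
      have h2 := reorder_length hro
      simpa [restrictObj] using h2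
    subst hg
    exact ⟨[], fun _ => rfl, rfl, rfl⟩
  | succ n ih =>
    intro π g hlen hsh hro
    rcases g with _ | ⟨e', g'⟩
    · exact ⟨π, fun _ => rfl, rfl, reorder_nil_left hro⟩
    set q := e'.proc with hq
    -- e' occurs in the objects of π
    have he'mem : e' ∈ restrictObj π := (reorder_mem hro).mpr List.mem_cons_self
    have hex : ∃ x ∈ π, ∃ y : ObjEv Proc Op Ret, x.toObj = some y ∧ y.proc = q := by
      obtain ⟨x, hx, hxo⟩ := List.mem_filterMap.mp he'mem
      exact ⟨x, hx, e', hxo, rfl⟩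
    obtain ⟨A, ev, B, hπdec, ⟨eo, hev, heop⟩, hAfree⟩ :=
      exists_first_split (fun (x : Ev Proc Var Val Op Ret) => ∃ y : ObjEv Proc Op Ret, x.toObj = some y ∧ y.proc = q) hex
    have hA : ∀ x ∈ A, ∀ y : ObjEv Proc Op Ret, x.toObj = some y → y.proc ≠ q := by
      intro x hx y hxy hyp
      exact hAfree x hx ⟨y, hxy, hyp⟩
    subst hπdec
    obtain ⟨heo, hNL, hro'⟩ := reorder_linRel_split hro hev heop hA
    cases heo.symm
    have hevproc : ev.proc = q := by rw [← heop, toObj_proc hev]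
    have hevmem : ev.toMem = none := by
      rcases ev_cases ev with ⟨a, -, hno, -⟩ | ⟨o', ho, -, hm⟩
      · rw [hno] at hev; exact absurd hev (by simp)
      · exact hm
    by_cases hAq : ∃ x ∈ A, x.proc = q
    · -- the first q-event of π precedes its first q-object event: it is a memory event.
      -- find the first memory event of π
      have hAmem : ∀ x ∈ A, x.proc = q → ∃ a, x = ⟨x.proc, EvAct.mem a⟩ ∧
          x.toMem = some ⟨x.proc, a⟩ := by
        intro x hx hxp
        rcases ev_cases x with ⟨a, hxe, hno, hm⟩ | ⟨o', ho, hop, hm⟩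
        · exact ⟨a, hxe, hm⟩
        · exact absurd (hop.trans hxp) (hA x hx o' ho)
      have hexm : ∃ x ∈ A ++ ev :: B, x.toMem ≠ none := by
        obtain ⟨x0, hx0, hx0p⟩ := hAq
        obtain ⟨a, -, hm⟩ := hAmem x0 hx0 hx0p
        exact ⟨x0, by simp [hx0], by simp [hm]⟩
      obtain ⟨γ, mv, δ, hπdec2, hmvmem, hγfree⟩ :=
        exists_first_split (fun (x : Ev Proc Var Val Op Ret) => x.toMem ≠ none) hexm
      obtain ⟨m, hm⟩ := Option.ne_none_iff_exists'.mp hmvmem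
      have hγnone : ∀ x ∈ γ, x.toMem = none := by
        intro x hx
        by_contra hc
        exact hγfree x hx hc
      -- γ is a prefix of A
      have hγA : γ <+: A := by
        have hπpre1 : γ <+: A ++ ev :: B := ⟨mv :: δ, hπdec2.symm⟩
        have hπpre2 : A <+: A ++ ev :: B := ⟨ev :: B, rfl⟩
        rcases le_or_gt A.length γ.length with hle | hlt
        · exfalso
          have hAγ : A <+: γ := List.prefix_of_prefix_length_le hπpre2 hπpre1 hle
          obtain ⟨x0, hx0, hx0p⟩ := hAq
          obtain ⟨a, -, hm0⟩ := hAmem x0 hx0 hx0p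
          exact hγfree x0 (hAγ.subset hx0) (by simp [hm0])
        · exact List.prefix_of_prefix_length_le hπpre1 hπpre2 (Nat.le_of_lt hlt)
      set p := m.proc with hp
      have hmvproc : mv.proc = p := by
        obtain ⟨m', hm'⟩ := Option.ne_none_iff_exists'.mp hmvmem
        rw [hm'] at hm
        cases hm
        exact (toMem_proc hm').symm
      have hmvform : ∃ a, mv = ⟨mv.proc, EvAct.mem a⟩ := by
        rcases ev_cases mv with ⟨a, hxe, -, -⟩ | ⟨o', -, -, hmm⟩
        · exact ⟨a, hxe⟩
        · rw [hmm] at hm; exact absurd hm (by simp)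
      by_cases hγp : ∃ x ∈ γ, x.proc = p
      · -- stuck configuration: impossible
        exfalso
        -- first: e' is a response
        have hAqf : (A.filter (fun e => decide (e.proc = q))) ≠ [] := by
          obtain ⟨x0, hx0, hx0p⟩ := hAq
          intro hc
          have : x0 ∈ A.filter (fun e => decide (e.proc = q)) :=
            List.mem_filter.mpr ⟨hx0, by simp [hx0p]⟩
          rw [hc] at this
          simp at this
        obtain ⟨x0', tA, hAfq⟩ := List.exists_cons_of_ne_nil hAqf
        have hx0'A : x0' ∈ A ∧ x0'.proc = q := by
          have : x0' ∈ A.filter (fun e => decide (e.proc = q)) := by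
            rw [hAfq]; simp
          have h2 := List.mem_filter.mp this
          exact ⟨h2.1, by simpa using h2.2⟩
        obtain ⟨a0, hx0'form, -⟩ := hAmem x0' hx0'A.1 hx0'A.2
        -- the filtered q-sequence
        have hfq : (A ++ ev :: B).filter (fun e => decide (e.proc = q)) =
            x0' :: (tA ++ ev :: B.filter (fun e => decide (e.proc = q))) := by
          rw [List.filter_append, hAfq, List.filter_cons_of_pos (by simp [hevproc])]
          simp
        obtain ⟨bq, hshq⟩ := hsh q
        rw [hfq] at hshq
        have hshqfalse : PShape q false
            (x0' :: (tA ++ ev :: B.filter (fun e => decide (e.proc = q)))) := by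
          cases hshq with
          | inv o h => exact absurd hx0'form (by simp)
          | mem a h => exact PShape.mem a h
          | res u h => exact absurd hx0'form (by simp)
        -- head of objects of the q-filtered list is e'
        have hobjfq : (restrictObj ((A ++ ev :: B).filter
            (fun e => decide (e.proc = q)))).head? = some e' := by
          rw [List.filter_append, restrictObj_append]
          have hAnil : restrictObj (A.filter (fun e => decide (e.proc = q))) = [] := by
            simp only [restrictObj]
            rw [List.filterMap_eq_nil_iff]
            intro x hx
            have h2 := List.mem_filter.mp hx
            rcases ev_cases x with ⟨a, -, hno, -⟩ | ⟨o', ho, hop, -⟩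
            · exact hno
            · exact absurd (hop.trans (by simpa using h2.2)) (hA x h2.1 o' ho)
          rw [hAnil, List.filter_cons_of_pos (by simp [hevproc])]
          simp [restrictObj, List.filterMap_cons, hev]
        have he'res : ∃ u : Ret, e' = ⟨q, ObjAct.res u⟩ := by
          have hshq2 : PShape q false ((A ++ ev :: B).filter
              (fun e => decide (e.proc = q))) := by
            rw [hfq]
            exact hshqfalse
          exact pshape_busy_head_res _ hshq2 hobjfq
        -- now analyze process p
        have hpq : p ≠ q := by
          intro hpq
          obtain ⟨x1, hx1, hx1p⟩ := hγp
          have hx1A : x1 ∈ A := hγA.subset hx1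
          obtain ⟨a1, -, hm1⟩ := hAmem x1 hx1A (by rw [hx1p, hpq])
          exact hγfree x1 hx1 (by simp [hm1])
        have hγpf : (γ.filter (fun e => decide (e.proc = p))) ≠ [] := by
          obtain ⟨x1, hx1, hx1p⟩ := hγp
          intro hc
          have : x1 ∈ γ.filter (fun e => decide (e.proc = p)) :=
            List.mem_filter.mpr ⟨hx1, by simp [hx1p]⟩
          rw [hc] at this
          simp at this
        obtain ⟨e0, t0, hγpf2⟩ := List.exists_cons_of_ne_nil hγpf
        have he0 : e0 ∈ γ ∧ e0.proc = p := by
          have : e0 ∈ γ.filter (fun e => decide (e.proc = p)) := by rw [hγpf2]; simp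
          have h2 := List.mem_filter.mp this
          exact ⟨h2.1, by simpa using h2.2⟩
        obtain ⟨y0, hy0, hy0p, -⟩ : ∃ y0 : ObjEv Proc Op Ret, e0.toObj = some y0 ∧
            y0.proc = e0.proc ∧ True := by
          rcases ev_cases e0 with ⟨a, -, -, hmm⟩ | ⟨o', ho, hop, -⟩
          · exact absurd (hγnone e0 he0.1) (by simp [hmm])
          · exact ⟨o', ho, hop, trivial⟩
        -- p's filtered sequence
        have hfp : (A ++ ev :: B).filter (fun e => decide (e.proc = p)) =
            e0 :: (t0 ++ mv :: δ.filter (fun e => decide (e.proc = p))) := by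
          rw [hπdec2, List.filter_append, hγpf2,
            List.filter_cons_of_pos (by simp [hmvproc])]
          simp
        obtain ⟨bp, hshp⟩ := hsh p
        rw [hfp] at hshp
        obtain ⟨u, he'form⟩ := he'res
        -- e0 is an object event of process p: the shape tells us it is inv or res
        rcases ev_cases e0 with ⟨a, he0form, -, -⟩ | ⟨o0, ho0, -, -⟩
        · exact absurd (hγnone e0 he0.1) (by rw [he0form]; simp)
        -- inv or res by cases on shape
        obtain ⟨am, hmvform2⟩ := hmvform
        cases hshp with
        | inv o hsh2 =>
          -- e0 is an invocation: contradiction with hNL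
          have hy0' : y0 = ⟨p, ObjAct.inv o⟩ := by
            rw [toObj_inv_ev] at hy0
            exact (Option.some_injective _ hy0).symm
          apply hNL y0 (mem_filterMap_of_prefix hγA
            (List.mem_filterMap.mpr ⟨_, he0.1, hy0⟩))
          rw [he'form, hy0']
          exact Or.inr ⟨trivial, trivial⟩
        | mem a2 hsh2 =>
          exact absurd (hγnone _ he0.1) (by simp)
        | res u2 hsh2 =>
          -- e0 is a response; the next p event is an invocation
          have hne : t0 ++ mv :: δ.filter (fun e => decide (e.proc = p)) ≠ [] := by simp
          rcases ht0 : t0 with _ | ⟨a'', t0'⟩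
          · -- then mv is the head, but mv is a memory event: contradiction with shape
            rw [ht0] at hsh2
            simp only [List.nil_append] at hsh2
            obtain ⟨o'', ho'', -⟩ := pshape_true_head hsh2
            rw [hmvform2] at ho''
            exact absurd (congrArg Ev.act ho'') (by simp)
          · rw [ht0] at hsh2
            simp only [List.cons_append] at hsh2
            obtain ⟨o'', ho'', -⟩ := pshape_true_head hsh2
            have ha''γ : a'' ∈ γ := by
              have : a'' ∈ γ.filter (fun e => decide (e.proc = p)) := by
                rw [hγpf2, ht0]; simp
              exact (List.mem_filter.mp this).1
            have hy'' : a''.toObj = some ⟨p, ObjAct.inv o''⟩ := by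
              rw [ho'']; rfl
            apply hNL ⟨p, ObjAct.inv o''⟩ (mem_filterMap_of_prefix hγA
              (List.mem_filterMap.mpr ⟨a'', ha''γ, hy''⟩))
            rw [he'form]
            exact Or.inr ⟨trivial, trivial⟩
      · -- emit the memory event mv
        obtain ⟨am, hmvform2⟩ := hmvform
        have hγpnil : γ.filter (fun e => decide (e.proc = p)) = [] := by
          rw [List.filter_eq_nil_iff]
          intro x hx
          simp only [decide_eq_true_eq]
          exact fun hc => hγp ⟨x, hx, hc⟩
        have hfp : (A ++ ev :: B).filter (fun e => decide (e.proc = p)) =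
            mv :: δ.filter (fun e => decide (e.proc = p)) := by
          rw [hπdec2, List.filter_append, hγpnil,
            List.filter_cons_of_pos (by simp [hmvproc])]
          simp
        obtain ⟨bp, hshp⟩ := hsh p
        rw [hfp] at hshp
        have hshp' : PShape p false (δ.filter (fun e => decide (e.proc = p))) := by
          rw [hmvform2, hmvproc] at hshp
          cases hshp with
          | mem a h => exact h
        -- recursion on γ ++ δ
        have hlen2 : (γ ++ δ).length ≤ n := by
          have h2 : (γ ++ mv :: δ).length = (A ++ ev :: B).length := by rw [hπdec2]
          simp only [List.length_append, List.length_cons] at h2 hlen ⊢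
          omega
        have hsh2 : ∀ r, ∃ b, PShape r b ((γ ++ δ).filter (fun e => decide (e.proc = r))) := by
          intro r
          by_cases hrp : r = p
          · subst hrp
            refine ⟨false, ?_⟩
            rw [List.filter_append, hγpnil, List.nil_append]
            exact hshp'
          · obtain ⟨br, hshr⟩ := hsh r
            refine ⟨br, ?_⟩
            rw [hπdec2, List.filter_append,
              List.filter_cons_of_neg (by simp [hmvproc]; exact fun hc => hrp hc.symm)]
              at hshr
            rwa [List.filter_append]
        have hro2 : Reorder linRel (e' :: g') (restrictObj (γ ++ δ)) := by
          have hmvobj : mv.toObj = none := by rw [hmvform2]; exact toObj_mem_ev _ _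
          have hobjeq : restrictObj (γ ++ δ) = restrictObj (A ++ ev :: B) := by
            rw [hπdec2, restrictObj_append, restrictObj_append]
            congr 1
            simp only [restrictObj, List.filterMap_cons, hmvobj]
          rwa [hobjeq]
        obtain ⟨π1', hfilters, hmem, hobj⟩ := ih (γ ++ δ) (e' :: g') hlen2 hsh2 hro2
        refine ⟨mv :: π1', ?_, ?_, ?_⟩
        · intro r
          by_cases hrp : r = p
          · subst hrp
            rw [List.filter_cons_of_pos (by simp [hmvproc]), hfilters p,
              List.filter_append, hγpnil, List.nil_append, hfp]
          · rw [List.filter_cons_of_neg (by simp [hmvproc]; exact fun hc => hrp hc.symm),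
              hfilters r, hπdec2, List.filter_append, List.filter_append,
              List.filter_cons_of_neg (by simp [hmvproc]; exact fun hc => hrp hc.symm)]
        · have hmγ : restrictMem γ = [] := by
            simp only [restrictMem]
            rw [List.filterMap_eq_nil_iff]
            exact hγnone
          have h1 : restrictMem (mv :: π1') = m :: restrictMem π1' := by
            simp only [restrictMem, List.filterMap_cons, hm]
          have h2 : restrictMem (mv :: δ) = m :: restrictMem δ := by
            simp only [restrictMem, List.filterMap_cons, hm]
          rw [hπdec2, restrictMem_append, hmγ, List.nil_append, h2, h1, hmem,
            restrictMem_append, hmγ, List.nil_append]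
        · have hmvobj : mv.toObj = none := by rw [hmvform2]; exact toObj_mem_ev _ _
          have h1 : restrictObj (mv :: π1') = restrictObj π1' := by
            simp only [restrictObj, List.filterMap_cons, hmvobj]
          rw [h1, hobj]
    · -- emit the object event ev (the first q event of π)
      have hAqnil : A.filter (fun e => decide (e.proc = q)) = [] := by
        rw [List.filter_eq_nil_iff]
        intro x hx
        simp only [decide_eq_true_eq]
        exact fun hc => hAq ⟨x, hx, hc⟩
      have hfq : (A ++ ev :: B).filter (fun e => decide (e.proc = q)) =
          ev :: B.filter (fun e => decide (e.proc = q)) := by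
        rw [List.filter_append, hAqnil, List.filter_cons_of_pos (by simp [hevproc])]
        simp
      obtain ⟨bq, hshq⟩ := hsh q
      rw [hfq] at hshq
      have hshq' : ∃ b, PShape q b (B.filter (fun e => decide (e.proc = q))) := by
        cases hshq with
        | inv o h => exact ⟨false, h⟩
        | res u h => exact ⟨true, h⟩
        | mem a h => simp at hev
      have hlen2 : (A ++ B).length ≤ n := by
        simp only [List.length_append, List.length_cons] at hlen ⊢
        omega
      have hsh2 : ∀ r, ∃ b, PShape r b ((A ++ B).filter (fun e => decide (e.proc = r))) := by
        intro r
        by_cases hrq : r = q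
        · subst hrq
          obtain ⟨b, hb⟩ := hshq'
          refine ⟨b, ?_⟩
          rw [List.filter_append, hAqnil, List.nil_append]
          exact hb
        · obtain ⟨br, hshr⟩ := hsh r
          refine ⟨br, ?_⟩
          rw [List.filter_append,
            List.filter_cons_of_neg (by simp [hevproc]; exact fun hc => hrq hc.symm)] at hshr
          rwa [List.filter_append]
      obtain ⟨π1', hfilters, hmem, hobj⟩ := ih (A ++ B) g' hlen2 hsh2 hro'
      refine ⟨ev :: π1', ?_, ?_, ?_⟩
      · intro r
        by_cases hrq : r = q
        · subst hrq
          rw [List.filter_cons_of_pos (by simp [hevproc]), hfilters q,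
            List.filter_append, hAqnil, List.nil_append, hfq]
        · rw [List.filter_cons_of_neg (by simp [hevproc]; exact fun hc => hrq hc.symm),
            hfilters r, List.filter_append, List.filter_append,
            List.filter_cons_of_neg (by simp [hevproc]; exact fun hc => hrq hc.symm)]
      · have h1 : restrictMem (ev :: π1') = restrictMem π1' := by
          simp only [restrictMem, List.filterMap_cons, hevmem]
        have h2 : restrictMem (ev :: B) = restrictMem B := by
          simp only [restrictMem, List.filterMap_cons, hevmem]
        rw [h1, hmem, restrictMem_append, restrictMem_append, h2]
      · have h1 : restrictObj (ev :: π1') = e' :: restrictObj π1' := by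
          simp only [restrictObj, List.filterMap_cons, hev]
        rw [h1, hobj]

end Scheduler

section Assembly

variable {Proc Var Val Op Ret : Type}

theorem part_a [DecidableEq Proc] [DecidableEq Var] [Zero Val]
    (I : Impl Proc Var Val Op Ret)
    (π0 : List (Ev Proc Var Val Op Ret)) (h1 : List (ObjEv Proc Op Ret))
    (hπ0 : π0 ∈ ImplTraces I)
    (hcs0 : CompleteSeq (restrictObj π0))
    (hi2 : restrictMem π0 ∈ (SCMModel Proc Var Val).OTraces (SCMModel Proc Var Val).init)
    (hseq : List (ObjEv Proc Op Ret))
    (hlin : Reorder linRel h1 hseq)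
    (havail : AvailableAfter I (restrictObj π0) hseq) :
    ∃ π1 : List (Ev Proc Var Val Op Ret),
      π0 ++ π1 ∈ ImplTraces I ∧ restrictObj π1 = h1 ∧
      restrictMem π0 ++ restrictMem π1 ∈
        (SCMModel Proc Var Val).OTraces (SCMModel Proc Var Val).init ∧
      procsEv π1 = procsObj h1 := by
  obtain ⟨πa, hta, hobja, hmema⟩ := havail π0 hπ0 hi2 rfl
  have hsplit := mem_impltraces_iff.mp hta
  have hshapes : ∀ p, PShape p true (πa.filter (fun e => decide (e.proc = p))) := by
    intro p
    obtain ⟨tp, hp⟩ := hsplit p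
    rw [List.filter_append] at hp
    obtain ⟨s1, hp1, hp2⟩ := ltspath_append_split hp
    have hs1 : s1 = none := by
      apply sip_none (π0.filter (fun e => decide (e.proc = p))).length _ le_rfl hp1
      rw [restrictObj_filter_proc]
      exact completeSeq_filter p hcs0
    rw [hs1] at hp2
    exact sip_shape hp2
  have hro : Reorder linRel h1 (restrictObj πa) := by rw [hobja]; exact hlin
  obtain ⟨π1, hfilters, hmem, hobj⟩ :=
    scheduler I πa.length πa h1 le_rfl (fun p => ⟨true, hshapes p⟩) hro
  refine ⟨π1, ?_, hobj, ?_, ?_⟩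
  · rw [mem_impltraces_iff]
    intro p
    obtain ⟨tp, hp⟩ := hsplit p
    refine ⟨tp, ?_⟩
    rw [List.filter_append, hfilters p, ← List.filter_append]
    exact hp
  · rw [hmem, ← restrictMem_append]
    exact hmema
  · ext p
    simp only [procsEv, procsObj, Set.mem_setOf_eq]
    constructor
    · rintro ⟨x, hx, rfl⟩
      have hxf : x ∈ πa.filter (fun e => decide (e.proc = x.proc)) := by
        rw [← hfilters x.proc]
        exact List.mem_filter.mpr ⟨hx, by simp⟩
      have hsh := hshapes x.proc
      rcases hfa : πa.filter (fun e => decide (e.proc = x.proc)) with _ | ⟨x1, l1⟩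
      · rw [hfa] at hxf; simp at hxf
      · rw [hfa] at hsh
        obtain ⟨o, hx1form, -⟩ := pshape_true_head hsh
        have hx1mem : x1 ∈ πa := by
          have : x1 ∈ πa.filter (fun e => decide (e.proc = x.proc)) := by rw [hfa]; simp
          exact (List.mem_filter.mp this).1
        have hobjmem : (⟨x.proc, ObjAct.inv o⟩ : ObjEv Proc Op Ret) ∈ restrictObj πa :=
          List.mem_filterMap.mpr ⟨x1, hx1mem, by rw [hx1form]; rfl⟩
        rw [hobja] at hobjmem
        exact ⟨_, (reorder_mem hlin).mp hobjmem, rfl⟩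
    · rintro ⟨y, hy, rfl⟩
      rw [← hobj] at hy
      obtain ⟨x, hx, hxy⟩ := List.mem_filterMap.mp hy
      exact ⟨x, hx, (toObj_proc hxy).symm⟩

theorem traces_shuffle [DecidableEq Proc] (I : Impl Proc Var Val Op Ret)
    {π0 π1' π2' c : List (Ev Proc Var Val Op Ret)}
    (h1 : π0 ++ π1' ∈ ImplTraces I) (h2 : π0 ++ π2' ∈ ImplTraces I)
    (hdisj : ∀ p, π1'.filter (fun e => decide (e.proc = p)) = [] ∨
      π2'.filter (fun e => decide (e.proc = p)) = [])
    (hsh : Shuffle π1' π2' c) : π0 ++ c ∈ ImplTraces I := by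
  rw [mem_impltraces_iff] at h1 h2 ⊢
  intro p
  have hcf := shuffle_filter (fun e => decide (e.proc = p)) hsh
  rcases hdisj p with hnil | hnil
  · rw [hnil] at hcf
    have heq := shuffle_nil_left' hcf
    obtain ⟨tp, hp⟩ := h2 p
    rw [List.filter_append] at hp ⊢
    rw [heq]
    exact ⟨tp, hp⟩
  · rw [hnil] at hcf
    have heq := shuffle_nil_right' hcf
    obtain ⟨tp, hp⟩ := h1 p
    rw [List.filter_append] at hp ⊢
    rw [heq]
    exact ⟨tp, hp⟩

theorem core_lemma [DecidableEq Proc]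
    (M : MemModel Proc Var Val) (I : Impl Proc Var Val Op Ret)
    (Spec : Set (List (ObjEv Proc Op Ret)))
    (hcons : Consistent I M Spec)
    {π0 c : List (Ev Proc Var Val Op Ret)} {h1 h2 h : List (ObjEv Proc Op Ret)}
    (htrace : π0 ++ c ∈ ImplTraces I)
    (hobj : restrictObj c = h)
    (hshuf : Shuffle h1 h2 h)
    (hc1 : CompleteH h1) (hc2 : CompleteH h2)
    (hdisjf : ∀ p, h1.filter (fun e => decide (e.proc = p)) = [] ∨
      h2.filter (fun e => decide (e.proc = p)) = [])
    (hcs0 : CompleteSeq (restrictObj π0))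
    (hmem : restrictMem (π0 ++ c) ∈ M.OTraces M.init) :
    LinInto Spec (restrictObj π0 ++ h) := by
  have hpart : ∀ p, (restrictObj π0 ++ h).filter (fun e => decide (e.proc = p)) =
      (restrictObj π0).filter (fun e => decide (e.proc = p)) ++
        h.filter (fun e => decide (e.proc = p)) := fun p => List.filter_append _ _
  have hfh : ∀ p, h.filter (fun e => decide (e.proc = p)) =
      h1.filter (fun e => decide (e.proc = p)) ∨
      h.filter (fun e => decide (e.proc = p)) =
      h2.filter (fun e => decide (e.proc = p)) := by
    intro p
    have hcf := shuffle_filter (fun e => decide (e.proc = p)) hshuf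
    rcases hdisjf p with hnil | hnil
    · rw [hnil] at hcf
      exact Or.inr (shuffle_nil_left' hcf)
    · rw [hnil] at hcf
      exact Or.inl (shuffle_nil_right' hcf)
  apply hcons
  · refine ⟨π0 ++ c, by simpa using htrace, by rw [restrictObj_append, hobj], by simpa using hmem⟩
  · constructor
    · intro p
      rw [hpart p]
      have hseq0 := completeSeq_filter p hcs0
      have hget : Sequential (h.filter (fun e => decide (e.proc = p))) := by
        rcases hfh p with heq | heq
        · rw [heq]; exact hc1.1 p
        · rw [heq]; exact hc2.1 p
      obtain ⟨hext, hchext, hpre⟩ := hget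
      obtain ⟨t, rfl⟩ := hpre
      exact ⟨(restrictObj π0).filter (fun e => decide (e.proc = p)) ++
        (h.filter (fun e => decide (e.proc = p)) ++ t),
        completeSeq_append hseq0 hchext, ⟨t, by simp⟩⟩
    · intro p
      rw [hpart p]
      have hcase : h.filter (fun e => decide (e.proc = p)) = [] ∨
          ∃ e : ObjEv Proc Op Ret,
            (h.filter (fun e => decide (e.proc = p))).getLast? = some e ∧ e.act.isRes := by
        rcases hfh p with heq | heq
        · rw [heq]; exact hc1.2 p
        · rw [heq]; exact hc2.2 p
      rcases hcase with hnil | ⟨e, hlast, hres⟩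
      · rw [hnil, List.append_nil]
        rcases completeSeq_getLast_res (completeSeq_filter p hcs0) with hnil0 | ⟨e, he, hr⟩
        · exact Or.inl hnil0
        · exact Or.inr ⟨e, he, hr⟩
      · right
        refine ⟨e, ?_, hres⟩
        rw [List.getLast?_append_of_ne_nil]
        · exact hlast
        · intro hc
          rw [hc] at hlast
          simp at hlast

theorem mem_setup [DecidableEq Var] [Zero Val]
    (M : MemModel Proc Var Val) (hM : WellBehaved M)
    {σ0 σ1 σ2 : List (MemEv Proc Var Val)}
    (hm1 : σ0 ++ σ1 ∈ (SCMModel Proc Var Val).OTraces (SCMModel Proc Var Val).init)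
    (hm2 : σ0 ++ σ2 ∈ (SCMModel Proc Var Val).OTraces (SCMModel Proc Var Val).init) :
    ∃ q0 : M.State, M.Stable q0 ∧ σ1 ∈ M.OTraces q0 ∧ σ2 ∈ M.OTraces q0 ∧
      ∃ π0M, LTSPath M.step M.init π0M q0 ∧ π0M.reduceOption = σ0 := by
  obtain ⟨R, hstable, hinit, hsim⟩ := hM
  replace hm1 := scm_otraces_iff.mp hm1
  replace hm2 := scm_otraces_iff.mp hm2
  obtain ⟨m1, hp1⟩ := hm1
  obtain ⟨m2, hp2⟩ := hm2
  rw [List.map_append] at hp1 hp2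
  obtain ⟨m0, hp01, hp1'⟩ := ltspath_append_split hp1
  obtain ⟨m0', hp02, hp2'⟩ := ltspath_append_split hp2
  have hm00 : m0' = m0 := scm_path_det hp02 hp01
  subst hm00
  have hinit' : R (SCMModel Proc Var Val).init M.init := hinit
  obtain ⟨q0, πM0, hpM0, hr0, hRq0⟩ := simlift R hsim σ0 hp01 hinit'
  obtain ⟨q1', πM1, hpM1, hr1, -⟩ := simlift R hsim σ1 hp1' hRq0
  obtain ⟨q2', πM2, hpM2, hr2, -⟩ := simlift R hsim σ2 hp2' hRq0
  exact ⟨q0, hstable _ _ hRq0, ⟨πM1, q1', hpM1, hr1⟩, ⟨πM2, q2', hpM2, hr2⟩,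
    πM0, hpM0, hr0⟩

theorem merged_otraces {M : MemModel Proc Var Val} {q0 : M.State}
    {σ0 σ : List (MemEv Proc Var Val)} {π0M : List (Option (MemEv Proc Var Val))}
    (h : σ ∈ M.OTraces q0) (hp : LTSPath M.step M.init π0M q0)
    (hr : π0M.reduceOption = σ0) : σ0 ++ σ ∈ M.OTraces M.init := by
  obtain ⟨πσ, qσ, hpσ, hrσ⟩ := h
  exact ⟨π0M ++ πσ, qσ, ltspath_append hp hpσ,
    by rw [List.reduceOption_append, hr, hrσ]⟩

end Assembly

/-- Merge Theorem: non-mergeable object histories can only be generated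
by non-mergeable memory traces (both weak and strong versions, selected by `strong`). -/
theorem merge_theorem (Proc Var Val Op Ret : Type) [Fintype Proc] [DecidableEq Proc]
    [DecidableEq Var] [Zero Val]
    (strong : Bool)
    (M : MemModel Proc Var Val) (hM : WellBehaved M)
    (I : Impl Proc Var Val Op Ret)
    (Spec : Set (List (ObjEv Proc Op Ret))) (hSpec : IsSpec Spec)
    (hcons : Consistent I M Spec)
    (π0 : List (Ev Proc Var Val Op Ret)) (h1 h2 : List (ObjEv Proc Op Ret))
    (hπ0 : π0 ∈ ImplTraces I)
    (hc1 : CompleteH h1) (hc2 : CompleteH h2)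
    (hi1 : restrictObj π0 ∈ Spec)
    (hi2 : restrictMem π0 ∈ (SCMModel Proc Var Val).OTraces (SCMModel Proc Var Val).init)
    (hi3 : procsObj h1 ∩ procsObj h2 = ∅)
    (hii1 : ∃ hseq : List (ObjEv Proc Op Ret),
      CompleteSeq hseq ∧ Reorder linRel h1 hseq ∧ AvailableAfter I (restrictObj π0) hseq)
    (hii2 : ∃ hseq : List (ObjEv Proc Op Ret),
      CompleteSeq hseq ∧ Reorder linRel h2 hseq ∧ AvailableAfter I (restrictObj π0) hseq)
    (hiii : ¬ SpecMergeableAfter strong Spec (restrictObj π0) h1 h2) :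
    ∃ π1 π2 : List (Ev Proc Var Val Op Ret),
      (π0 ++ π1 ∈ ImplTraces I ∧ restrictObj π1 = h1 ∧
        restrictMem π0 ++ restrictMem π1 ∈
          (SCMModel Proc Var Val).OTraces (SCMModel Proc Var Val).init ∧
        procsEv π1 = procsObj h1) ∧
      (π0 ++ π2 ∈ ImplTraces I ∧ restrictObj π2 = h2 ∧
        restrictMem π0 ++ restrictMem π2 ∈
          (SCMModel Proc Var Val).OTraces (SCMModel Proc Var Val).init ∧
        procsEv π2 = procsObj h2) ∧
      (∀ π1' π2' : List (Ev Proc Var Val Op Ret),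
        Reorder sprocEv π1 π1' → Reorder sprocEv π2 π2' →
        restrictObj π1' = h1 → restrictObj π2' = h2 →
        restrictMem π0 ++ restrictMem π1' ∈
          (SCMModel Proc Var Val).OTraces (SCMModel Proc Var Val).init →
        restrictMem π0 ++ restrictMem π2' ∈
          (SCMModel Proc Var Val).OTraces (SCMModel Proc Var Val).init →
        ¬ MemMergeable strong M (restrictMem π1') (restrictMem π2')) ∧
      ¬ MemMergeable strong M (restrictMem π1) (restrictMem π2) := by
  obtain ⟨hseq1, hcseq1, hlin1, havail1⟩ := hii1
  obtain ⟨hseq2, hcseq2, hlin2, havail2⟩ := hii2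
  have hcs0 : CompleteSeq (restrictObj π0) := hSpec.1 _ hi1
  obtain ⟨π1, ht1, ho1, hm1, hpr1⟩ := part_a I π0 h1 hπ0 hcs0 hi2 hseq1 hlin1 havail1
  obtain ⟨π2, ht2, ho2, hm2, hpr2⟩ := part_a I π0 h2 hπ0 hcs0 hi2 hseq2 hlin2 havail2
  have hdisjf : ∀ p, h1.filter (fun e => decide (e.proc = p)) = [] ∨
      h2.filter (fun e => decide (e.proc = p)) = [] := by
    intro p
    by_contra hcon
    push_neg at hcon
    obtain ⟨hn1, hn2⟩ := hcon
    obtain ⟨x1, hx1⟩ := List.exists_mem_of_ne_nil _ hn1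
    obtain ⟨x2, hx2⟩ := List.exists_mem_of_ne_nil _ hn2
    have hp1mem : p ∈ procsObj h1 := by
      obtain ⟨hm, hq⟩ := List.mem_filter.mp hx1
      exact ⟨x1, hm, by simpa using hq⟩
    have hp2mem : p ∈ procsObj h2 := by
      obtain ⟨hm, hq⟩ := List.mem_filter.mp hx2
      exact ⟨x2, hm, by simpa using hq⟩
    have : p ∈ procsObj h1 ∩ procsObj h2 := ⟨hp1mem, hp2mem⟩
    rw [hi3] at this
    exact this
  have hmain : ∀ π1' π2' : List (Ev Proc Var Val Op Ret),
      Reorder sprocEv π1 π1' → Reorder sprocEv π2 π2' →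
      restrictObj π1' = h1 → restrictObj π2' = h2 →
      restrictMem π0 ++ restrictMem π1' ∈
        (SCMModel Proc Var Val).OTraces (SCMModel Proc Var Val).init →
      restrictMem π0 ++ restrictMem π2' ∈
        (SCMModel Proc Var Val).OTraces (SCMModel Proc Var Val).init →
      ¬ MemMergeable strong M (restrictMem π1') (restrictMem π2') := by
    intro π1' π2' hre1 hre2 ho1' ho2' hm1' hm2' hmerge
    have htot : ∀ p : Proc, ∀ a b : Ev Proc Var Val Op Ret,
        decide (a.proc = p) → decide (b.proc = p) → sprocEv a b := by
      intro p a b ha hb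
      simp only [decide_eq_true_eq] at ha hb
      show a.proc = b.proc
      rw [ha, hb]
    have hfil1 : ∀ p, π1'.filter (fun e => decide (e.proc = p)) =
        π1.filter (fun e => decide (e.proc = p)) :=
      fun p => reorder_filter_eq hre1 _ (htot p)
    have hfil2 : ∀ p, π2'.filter (fun e => decide (e.proc = p)) =
        π2.filter (fun e => decide (e.proc = p)) :=
      fun p => reorder_filter_eq hre2 _ (htot p)
    have ht1' : π0 ++ π1' ∈ ImplTraces I := by
      rw [mem_impltraces_iff] at ht1 ⊢
      intro p
      obtain ⟨tp, hp⟩ := ht1 p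
      rw [List.filter_append] at hp ⊢
      rw [hfil1 p]
      exact ⟨tp, hp⟩
    have ht2' : π0 ++ π2' ∈ ImplTraces I := by
      rw [mem_impltraces_iff] at ht2 ⊢
      intro p
      obtain ⟨tp, hp⟩ := ht2 p
      rw [List.filter_append] at hp ⊢
      rw [hfil2 p]
      exact ⟨tp, hp⟩
    have hdisjev : ∀ p, π1'.filter (fun e => decide (e.proc = p)) = [] ∨
        π2'.filter (fun e => decide (e.proc = p)) = [] := by
      intro p
      rcases hdisjf p with hnil | hnil
      · left
        rw [hfil1 p, List.filter_eq_nil_iff]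
        intro x hx
        simp only [decide_eq_true_eq]
        intro hpx
        have hpmem : p ∈ procsObj h1 := by
          rw [← hpr1]
          exact ⟨x, hx, hpx⟩
        obtain ⟨e, he, hep⟩ := hpmem
        have hmem2 : e ∈ h1.filter (fun e => decide (e.proc = p)) :=
          List.mem_filter.mpr ⟨he, by simp [hep]⟩
        rw [hnil] at hmem2
        simp at hmem2
      · right
        rw [hfil2 p, List.filter_eq_nil_iff]
        intro x hx
        simp only [decide_eq_true_eq]
        intro hpx
        have hpmem : p ∈ procsObj h2 := by
          rw [← hpr2]
          exact ⟨x, hx, hpx⟩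
        obtain ⟨e, he, hep⟩ := hpmem
        have hmem2 : e ∈ h2.filter (fun e => decide (e.proc = p)) :=
          List.mem_filter.mpr ⟨he, by simp [hep]⟩
        rw [hnil] at hmem2
        simp at hmem2
    obtain ⟨q0, hst0, hin1, hin2, π0M, hpM0, hr0⟩ := mem_setup M hM hm1' hm2'
    cases strong with
    | false =>
      have hiii' : ¬ WeaklySpecMergeableAfter Spec (restrictObj π0) h1 h2 := hiii
      have hmerge' : WeaklyMergeable M (restrictMem π1') (restrictMem π2') := hmerge
      obtain ⟨σ, hσshuf, hσot⟩ := hmerge' q0 hst0 hin1 hin2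
      obtain ⟨c, hcshuf, hcmem⟩ := shuffle_lift Ev.toMem hσshuf π1' π2' rfl rfl
      have hobjshuf : Shuffle h1 h2 (restrictObj c) := by
        have h3 : Shuffle (restrictObj π1') (restrictObj π2') (restrictObj c) :=
          shuffle_filterMap Ev.toObj hcshuf
        rwa [ho1', ho2'] at h3
      have htc : π0 ++ c ∈ ImplTraces I := traces_shuffle I ht1' ht2' hdisjev hcshuf
      have hmemfull : restrictMem (π0 ++ c) ∈ M.OTraces M.init := by
        rw [restrictMem_append]
        have hcm : restrictMem c = σ := hcmem
        rw [hcm]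
        exact merged_otraces hσot hpM0 hr0
      have hlin := core_lemma M I Spec hcons htc rfl hobjshuf hc1 hc2 hdisjf hcs0 hmemfull
      apply hiii'
      intro _ _
      exact ⟨restrictObj c, hobjshuf, hlin⟩
    | true =>
      have hiii' : ¬ StronglySpecMergeableAfter Spec (restrictObj π0) h1 h2 := hiii
      have hmerge' : StronglyMergeable M (restrictMem π1') (restrictMem π2') := hmerge
      rw [StronglySpecMergeableAfter] at hiii'
      push_neg at hiii'
      obtain ⟨hL1, hL2, hstar, hshufstar, hnotlin⟩ := hiii'
      obtain ⟨c, hcshuf, hcobj0⟩ := shuffle_lift Ev.toObj hshufstar π1' π2' ho1' ho2'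
      have hcobj : restrictObj c = hstar := hcobj0
      have hmemshuf : Shuffle (restrictMem π1') (restrictMem π2') (restrictMem c) :=
        shuffle_filterMap Ev.toMem hcshuf
      have hσot := hmerge' q0 hst0 hin1 hin2 _ hmemshuf
      have htc : π0 ++ c ∈ ImplTraces I := traces_shuffle I ht1' ht2' hdisjev hcshuf
      have hmemfull : restrictMem (π0 ++ c) ∈ M.OTraces M.init := by
        rw [restrictMem_append]
        exact merged_otraces hσot hpM0 hr0
      have hobjshuf : Shuffle h1 h2 (restrictObj c) := by
        rw [hcobj]
        exact hshufstar
      have hlin := core_lemma M I Spec hcons htc rfl hobjshuf hc1 hc2 hdisjf hcs0 hmemfull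
      rw [hcobj] at hlin
      exact hnotlin hlin
  exact ⟨π1, π2, ⟨ht1, ho1, hm1, hpr1⟩, ⟨ht2, ho2, hm2, hpr2⟩, hmain,
    hmain π1 π2 (reorder_refl π1) (reorder_refl π2) ho1 ho2 hm1 hm2⟩


end WMM
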